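/- arXiv:2008.02261 — 3 statements merged into one kernel-verified Lean document; each statement's English description precedes it below -/
import Mathlib

section
/- Let f : ℝ → ℝ be a convex function of class C¹ which is coercive (f(x) → +∞ as |x| → ∞) and attains its minimum exactly on a segment [a,b] with a < b (i.e., argmin f = [a,b]). Let 2 ≤ p < 3 and let x : [0,∞) → ℝ be a twice continuously differentiable solution of ẍ(t) + |ẋ(t)|^{p−2} ẋ(t) + f′(x(t)) = 0 on [0,∞). Then x(t) converges as t → ∞, and its limit belongs to [a,b]. -/
open Set Filter Topology

noncomputable section


lemma rpow_abs_mul_self {p : ℝ} (hp2 : 2 ≤ p) (v : ℝ) :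
    |v| ^ (p - 2) * (v * v) = |v| ^ p := by
  rcases eq_or_ne v 0 with rfl | hv
  · simp [Real.zero_rpow (by norm_num; linarith : p ≠ 0)]
  · have hv' : 0 < |v| := abs_pos.2 hv
    calc |v| ^ (p - 2) * (v * v) = |v| ^ (p - 2) * (|v| ^ (1:ℝ) * |v| ^ (1:ℝ)) := by
          rw [Real.rpow_one, abs_mul_abs_self]
      _ = |v| ^ (p - 2 + 1 + 1) := by rw [Real.rpow_add hv', Real.rpow_add hv']; ring
      _ = |v| ^ p := by congr 1; ring

lemma rpow_abs_mul_abs {p : ℝ} (hp2 : 2 ≤ p) (v : ℝ) :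
    |v| ^ (p - 2) * |v| = |v| ^ (p - 1) := by
  rcases eq_or_ne v 0 with rfl | hv
  · simp [Real.zero_rpow (by norm_num; linarith : p - 1 ≠ 0)]
  · have hv' : 0 < |v| := abs_pos.2 hv
    calc |v| ^ (p - 2) * |v| = |v| ^ (p - 2) * |v| ^ (1:ℝ) := by rw [Real.rpow_one]
      _ = |v| ^ (p - 2 + 1) := by rw [Real.rpow_add hv']
      _ = |v| ^ (p - 1) := by congr 1; ring

/-- monotone helper via interior derivatives -/
lemma helperMono' {g g' : ℝ → ℝ} {D : Set ℝ} (hD : Convex ℝ D)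
    (hgc : ContinuousOn g D)
    (hg : ∀ t ∈ interior D, HasDerivAt g (g' t) t)
    (h0 : ∀ t ∈ interior D, 0 ≤ g' t) : MonotoneOn g D := by
  apply monotoneOn_of_deriv_nonneg hD hgc
  · exact fun t ht => (hg t ht).differentiableAt.differentiableWithinAt
  · intro t ht
    rw [(hg t ht).deriv]; exact h0 t ht

lemma helperAnti' {g g' : ℝ → ℝ} {D : Set ℝ} (hD : Convex ℝ D)
    (hgc : ContinuousOn g D)
    (hg : ∀ t ∈ interior D, HasDerivAt g (g' t) t)
    (h0 : ∀ t ∈ interior D, g' t ≤ 0) : AntitoneOn g D := by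
  apply antitoneOn_of_deriv_nonpos hD hgc
  · exact fun t ht => (hg t ht).differentiableAt.differentiableWithinAt
  · intro t ht
    rw [(hg t ht).deriv]; exact h0 t ht

/-- core ψ-argument: while the solution moves right inside the argmin segment with pure
friction, the distance travelled is bounded by `|x' s|^(3-p)/(3-p)`. -/
lemma core_psi {p : ℝ} (hp2 : 2 ≤ p) (hp3 : p < 3) {x x' x'' : ℝ → ℝ} {s τ c d : ℝ}
    (hst : s < τ)
    (hx : ∀ t ∈ Icc s τ, HasDerivWithinAt x (x' t) (Icc s τ) t)
    (hx' : ∀ t ∈ Icc s τ, HasDerivWithinAt x' (x'' t) (Icc s τ) t)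
    (hode : ∀ t ∈ Icc s τ, x'' t = -(|x' t| ^ (p - 2) * x' t))
    (hpos : ∀ t ∈ Ico s τ, 0 < x' t)
    (hxs : x s = c) (hxt : x τ = d) :
    d - c ≤ |x' s| ^ (3 - p) / (3 - p) := by
  have hq : (0:ℝ) < 3 - p := by linarith
  set ψ : ℝ → ℝ := fun u => |x' u| ^ (3 - p) / (3 - p) with hψ
  set φ : ℝ → ℝ := fun u => ψ u + x u with hφ
  have hx'c : ContinuousOn x' (Icc s τ) := fun t ht => (hx' t ht).continuousWithinAt
  have hxc : ContinuousOn x (Icc s τ) := fun t ht => (hx t ht).continuousWithinAt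
  have hψc : ContinuousOn ψ (Icc s τ) := by
    apply ContinuousOn.div_const
    intro t ht
    exact (Real.continuousAt_rpow_const _ _ (Or.inr hq.le)).comp_continuousWithinAt
      (continuous_abs.continuousAt.comp_continuousWithinAt (hx'c t ht))
  have hIoo : interior (Icc s τ) = Ioo s τ := interior_Icc
  -- derivative of φ is zero on the interior
  have hφd : ∀ t ∈ interior (Icc s τ), HasDerivAt φ 0 t := by
    intro t ht
    rw [hIoo] at ht
    have htm : t ∈ Icc s τ := Ioo_subset_Icc_self ht
    have hnb : Icc s τ ∈ 𝓝 t := Icc_mem_nhds ht.1 ht.2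
    have hx'at : HasDerivAt x' (x'' t) t := (hx' t htm).hasDerivAt hnb
    have hxat : HasDerivAt x (x' t) t := (hx t htm).hasDerivAt hnb
    have hpt : 0 < x' t := hpos t ⟨ht.1.le, ht.2⟩
    have hev : ∀ᶠ u in 𝓝 t, 0 < x' u :=
      (hx'at.continuousAt).eventually (eventually_gt_nhds hpt)
    have h1 : HasDerivAt (fun u => x' u ^ (3 - p)) (x'' t * (3 - p) * x' t ^ (3 - p - 1)) t :=
      hx'at.rpow_const (Or.inl hpt.ne')
    have h2 : HasDerivAt (fun u => |x' u| ^ (3 - p))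
        (x'' t * (3 - p) * x' t ^ (3 - p - 1)) t := by
      apply h1.congr_of_eventuallyEq
      filter_upwards [hev] with u hu
      rw [abs_of_pos hu]
    have h3 : HasDerivAt ψ ((x'' t * (3 - p) * x' t ^ (3 - p - 1)) / (3 - p)) t :=
      h2.div_const _
    have key : (x'' t * (3 - p) * x' t ^ (3 - p - 1)) / (3 - p) + x' t = 0 := by
      have hode' : x'' t = -(x' t ^ (p - 2) * x' t) := by
        have := hode t htm
        rwa [abs_of_pos hpt] at this
      have e1 : x' t ^ (3 - p - 1) * x' t ^ (p - 2) = 1 := by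
        rw [← Real.rpow_add hpt, show (3 - p - 1 + (p - 2)) = (0:ℝ) by ring, Real.rpow_zero]
      have e2 : x'' t * x' t ^ (3 - p - 1) = -(x' t) := by
        rw [hode']
        calc -(x' t ^ (p - 2) * x' t) * x' t ^ (3 - p - 1)
            = -(x' t * (x' t ^ (3 - p - 1) * x' t ^ (p - 2))) := by ring
          _ = -(x' t) := by rw [e1, mul_one]
      calc x'' t * (3 - p) * x' t ^ (3 - p - 1) / (3 - p) + x' t
          = (x'' t * x' t ^ (3 - p - 1)) * ((3 - p) / (3 - p)) + x' t := by ring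
        _ = 0 := by rw [div_self hq.ne', e2]; ring
    have := h3.add hxat
    rw [show (x'' t * (3 - p) * x' t ^ (3 - p - 1)) / (3 - p) + x' t = 0 from key] at this
    exact this
  have hφc : ContinuousOn φ (Icc s τ) := hψc.add hxc
  have hmono : MonotoneOn φ (Icc s τ) :=
    helperMono' (convex_Icc s τ) hφc hφd (fun t ht => le_of_eq rfl)
  have hanti : AntitoneOn φ (Icc s τ) :=
    helperAnti' (convex_Icc s τ) hφc hφd (fun t ht => le_of_eq rfl)
  have hs_mem : s ∈ Icc s τ := ⟨le_rfl, hst.le⟩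
  have hτ_mem : τ ∈ Icc s τ := ⟨hst.le, le_rfl⟩
  have h1 : φ s ≤ φ τ := hmono hs_mem hτ_mem hst.le
  have h2 : φ τ ≤ φ s := hanti hs_mem hτ_mem hst.le
  have hφeq : φ s = φ τ := le_antisymm h1 h2
  have hψτ : 0 ≤ ψ τ := div_nonneg (Real.rpow_nonneg (abs_nonneg _) _) hq.le
  have : ψ s + c = ψ τ + d := by
    have := hφeq
    simp only [hφ, hxs, hxt] at this
    exact this
  have : d - c = ψ s - ψ τ := by linarith
  rw [this]
  have : ψ s = |x' s| ^ (3 - p) / (3 - p) := rfl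
  linarith


/-- derivative-sign helper -/
lemma helperAnti {g g' : ℝ → ℝ} {D : Set ℝ} (hD : Convex ℝ D)
    (hg : ∀ t ∈ D, HasDerivWithinAt g (g' t) D t)
    (h0 : ∀ t ∈ interior D, g' t ≤ 0) : AntitoneOn g D := by
  apply antitoneOn_of_deriv_nonpos hD (fun t ht => (hg t ht).continuousWithinAt)
  · intro t ht
    exact ((hg t (interior_subset ht)).hasDerivAt (mem_interior_iff_mem_nhds.1 ht)).differentiableAt.differentiableWithinAt
  · intro t ht
    rw [((hg t (interior_subset ht)).hasDerivAt (mem_interior_iff_mem_nhds.1 ht)).deriv]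
    exact h0 t ht

lemma helperMono {g g' : ℝ → ℝ} {D : Set ℝ} (hD : Convex ℝ D)
    (hg : ∀ t ∈ D, HasDerivWithinAt g (g' t) D t)
    (h0 : ∀ t ∈ interior D, 0 ≤ g' t) : MonotoneOn g D := by
  apply monotoneOn_of_deriv_nonneg hD (fun t ht => (hg t ht).continuousWithinAt)
  · intro t ht
    exact ((hg t (interior_subset ht)).hasDerivAt (mem_interior_iff_mem_nhds.1 ht)).differentiableAt.differentiableWithinAt
  · intro t ht
    rw [((hg t (interior_subset ht)).hasDerivAt (mem_interior_iff_mem_nhds.1 ht)).deriv]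
    exact h0 t ht


lemma crossing {x : ℝ → ℝ} {s₁ s₂ c d : ℝ} (hs : s₁ ≤ s₂)
    (hxc : ContinuousOn x (Icc s₁ s₂)) (hcd : c < d) (h1 : x s₁ < c) (h2 : d < x s₂) :
    ∃ s s', s₁ ≤ s ∧ s < s' ∧ s' ≤ s₂ ∧ x s = c ∧ x s' = d ∧
      ∀ t ∈ Icc s s', x t ∈ Icc c d := by
  set S' : Set ℝ := {t ∈ Icc s₁ s₂ | d ≤ x t} with hS'
  have hS'closed : IsClosed S' :=
    hxc.preimage_isClosed_of_isClosed isClosed_Icc isClosed_Ici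
  have hS'ne : S'.Nonempty := ⟨s₂, ⟨hs, le_rfl⟩, h2.le⟩
  have hS'bdd : BddBelow S' := ⟨s₁, fun t ht => ht.1.1⟩
  set s' := sInf S' with hs'def
  have hs'mem : s' ∈ S' := hS'closed.csInf_mem hS'ne hS'bdd
  have hs'lt : ∀ t ∈ Icc s₁ s₂, t < s' → x t < d := by
    intro t ht htlt
    by_contra h
    exact absurd (csInf_le hS'bdd ⟨ht, not_lt.1 h⟩) (not_le.2 htlt)
  have hs1s' : s₁ < s' := by
    rcases eq_or_lt_of_le hs'mem.1.1 with h | h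
    · exact absurd (h ▸ hs'mem.2) (not_le.2 (h1.trans hcd))
    · exact h
  have hxs' : x s' = d := by
    by_contra hne
    have hlt : d < x s' := lt_of_le_of_ne hs'mem.2 (Ne.symm hne)
    have hc : ContinuousWithinAt x (Icc s₁ s₂) s' := hxc s' hs'mem.1
    have hev : ∀ᶠ t in 𝓝[Ioo s₁ s'] s', d < x t := by
      have : Tendsto x (𝓝[Ioo s₁ s'] s') (𝓝 (x s')) := by
        apply hc.tendsto.mono_left (nhdsWithin_mono _ ?_)
        intro t ht
        exact ⟨ht.1.le, ht.2.le.trans hs'mem.1.2⟩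
      exact this (Ioi_mem_nhds hlt)
    have : NeBot (𝓝[Ioo s₁ s'] s') := right_nhdsWithin_Ioo_neBot hs1s'
    obtain ⟨t, htd, htm⟩ := (hev.and (eventually_mem_nhdsWithin)).exists
    exact absurd (hs'lt t ⟨htm.1.le, htm.2.le.trans hs'mem.1.2⟩ htm.2) (not_lt.2 htd.le)
  -- now the last exit from c
  set S : Set ℝ := {t ∈ Icc s₁ s' | x t ≤ c} with hSdef
  have hSclosed : IsClosed S := by
    show IsClosed (Icc s₁ s' ∩ x ⁻¹' Iic c)
    exact (hxc.mono (Icc_subset_Icc le_rfl hs'mem.1.2)).preimage_isClosed_of_isClosed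
      isClosed_Icc isClosed_Iic
  have hSne : S.Nonempty := ⟨s₁, ⟨le_rfl, hs1s'.le⟩, h1.le⟩
  have hSbdd : BddAbove S := ⟨s', fun t ht => ht.1.2⟩
  set s := sSup S with hsdef
  have hsmem : s ∈ S := hSclosed.csSup_mem hSne hSbdd
  have hsgt : ∀ t, s < t → t ∈ Icc s₁ s' → c < x t := by
    intro t hst ht
    by_contra h
    exact absurd (le_csSup hSbdd ⟨ht, not_lt.1 h⟩) (not_le.2 hst)
  have hss' : s < s' := by
    rcases eq_or_lt_of_le hsmem.1.2 with h | h
    · exact absurd (h ▸ hsmem.2) (not_le.2 (hcd.trans_le (hxs' ▸ le_rfl)))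
    · exact h
  have hxs : x s = c := by
    by_contra hne
    have hlt : x s < c := lt_of_le_of_ne hsmem.2 hne
    have hc : ContinuousWithinAt x (Icc s₁ s₂) s :=
      hxc s ⟨hsmem.1.1, hsmem.1.2.trans hs'mem.1.2⟩
    have hev : ∀ᶠ t in 𝓝[Ioo s s'] s, x t < c := by
      have : Tendsto x (𝓝[Ioo s s'] s) (𝓝 (x s)) := by
        apply hc.tendsto.mono_left (nhdsWithin_mono _ ?_)
        intro t ht
        exact ⟨hsmem.1.1.trans ht.1.le, ht.2.le.trans hs'mem.1.2⟩
      exact this (Iio_mem_nhds hlt)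
    have : NeBot (𝓝[Ioo s s'] s) := left_nhdsWithin_Ioo_neBot hss'
    obtain ⟨t, htd, htm⟩ := (hev.and (eventually_mem_nhdsWithin)).exists
    exact absurd (hsgt t htm.1 ⟨hsmem.1.1.trans htm.1.le, htm.2.le⟩) (not_lt.2 htd.le)
  refine ⟨s, s', hsmem.1.1, hss', hs'mem.1.2, hxs, hxs', ?_⟩
  intro t ht
  constructor
  · rcases eq_or_lt_of_le ht.1 with h | h
    · exact (h ▸ hxs).ge
    · exact (hsgt t h ⟨hsmem.1.1.trans ht.1, ht.2⟩).le
  · rcases eq_or_lt_of_le ht.2 with h | h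
    · exact (h ▸ hxs').le
    · exact (hs'lt t ⟨hsmem.1.1.trans ht.1, (ht.2.trans hs'mem.1.2)⟩ h).le


set_option maxHeartbeats 1000000 in
/-- **Convergence under sufficiently strong damping (Proposition 6.4).**
Let `f : ℝ → ℝ` be convex, `C¹`, coercive, with `argmin f = [a,b]`, `a < b`.
For `2 ≤ p < 3`, every `C²` solution on `[0,∞)` of `ẍ + |ẋ|^{p-2} ẋ + f'(x) = 0`
converges as `t → ∞`, and its limit belongs to `[a,b]`. -/
theorem strong_damping_convergence
    (f : ℝ → ℝ) (hf : ContDiff ℝ 1 f) (hconv : ConvexOn ℝ Set.univ f)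
    (hcoercive : Tendsto f (cocompact ℝ) atTop)
    (a b : ℝ) (hab : a < b)
    (hargmin : {z : ℝ | ∀ y, f z ≤ f y} = Set.Icc a b)
    (p : ℝ) (hp2 : 2 ≤ p) (hp3 : p < 3)
    (x x' x'' : ℝ → ℝ)
    (hx : ∀ t ∈ Set.Ici (0:ℝ), HasDerivWithinAt x (x' t) (Set.Ici 0) t)
    (hx' : ∀ t ∈ Set.Ici (0:ℝ), HasDerivWithinAt x' (x'' t) (Set.Ici 0) t)
    (hx''c : ContinuousOn x'' (Set.Ici 0))
    (heq : ∀ t ∈ Set.Ici (0:ℝ),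
        x'' t + |x' t| ^ (p - 2) * x' t + deriv f (x t) = 0) :
    ∃ L ∈ Set.Icc a b, Tendsto x atTop (𝓝 L) := by
  have hfd : Differentiable ℝ f := hf.differentiable one_ne_zero
  have hfc : Continuous f := hfd.continuous
  have hf'c : Continuous (deriv f) := hf.continuous_deriv le_rfl
  set m := f a with hm
  have hmin : ∀ y, m ≤ f y := by
    have ha : a ∈ {z : ℝ | ∀ y, f z ≤ f y} := by rw [hargmin]; exact ⟨le_rfl, hab.le⟩
    exact ha
  have hfz : ∀ z ∈ Icc a b, f z = m := by
    intro z hz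
    rw [← hargmin] at hz
    exact le_antisymm (hz a) (hmin z)
  have hf'0 : ∀ z ∈ Icc a b, deriv f z = 0 := by
    intro z hz
    rw [← hargmin] at hz
    exact IsLocalMin.deriv_eq_zero (Filter.Eventually.of_forall hz)
  have hxc : ContinuousOn x (Ici 0) := fun t ht => (hx t ht).continuousWithinAt
  have hx'c : ContinuousOn x' (Ici 0) := fun t ht => (hx' t ht).continuousWithinAt
  set E : ℝ → ℝ := fun t => f (x t) + x' t * x' t / 2 with hE
  have hEd : ∀ t ∈ Ici (0:ℝ), HasDerivWithinAt E (-(|x' t| ^ p)) (Ici 0) t := by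
    intro t ht
    have h1 : HasDerivWithinAt (fun u => f (x u)) (deriv f (x t) * x' t) (Ici 0) t :=
      (hfd (x t)).hasDerivAt.comp_hasDerivWithinAt t (hx t ht)
    have h2 : HasDerivWithinAt (fun u => x' u * x' u / 2)
        ((x'' t * x' t + x' t * x'' t) / 2) (Ici 0) t :=
      ((hx' t ht).mul (hx' t ht)).div_const 2
    have h3 := h1.add h2
    have key : deriv f (x t) * x' t + (x'' t * x' t + x' t * x'' t) / 2 = -(|x' t| ^ p) := by
      rw [← rpow_abs_mul_self hp2 (x' t)]
      linear_combination (x' t) * (heq t ht)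
    rw [key] at h3
    exact h3
  have hEanti : AntitoneOn E (Ici 0) := by
    apply helperAnti (convex_Ici 0) hEd
    intro t _
    exact neg_nonpos.2 (Real.rpow_nonneg (abs_nonneg _) _)
  have hmE : ∀ t, 0 ≤ t → m ≤ E t := by
    intro t _
    have h1 := hmin (x t)
    have h2 := mul_self_nonneg (x' t)
    simp only [hE]
    nlinarith
  have hE0 : ∀ t, 0 ≤ t → E t ≤ E 0 := fun t ht => hEanti self_mem_Ici ht ht
  have hfxE : ∀ t, 0 ≤ t → f (x t) ≤ E 0 := by
    intro t ht
    have h2 := mul_self_nonneg (x' t)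
    have := hE0 t ht
    simp only [hE] at this ⊢
    nlinarith
  obtain ⟨R, hR0, hRx⟩ : ∃ R, 0 < R ∧ ∀ t, 0 ≤ t → |x t| ≤ R := by
    have hco : {z : ℝ | E 0 < f z} ∈ cocompact ℝ :=
      hcoercive.eventually (eventually_gt_atTop (E 0))
    rw [mem_cocompact] at hco
    obtain ⟨K, hKc, hKsub⟩ := hco
    obtain ⟨C, hC⟩ := isBounded_iff_forall_norm_le.1 hKc.isBounded
    refine ⟨|C| + 1, by positivity, ?_⟩
    intro t ht
    have hxK : x t ∈ K := by
      by_contra hxK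
      exact absurd (hfxE t ht) (not_le.2 (hKsub hxK))
    have := hC (x t) hxK
    rw [Real.norm_eq_abs] at this
    calc |x t| ≤ C := this
      _ ≤ |C| + 1 := by have := le_abs_self C; linarith
  obtain ⟨V, hV1, hVx⟩ : ∃ V, 1 ≤ V ∧ ∀ t, 0 ≤ t → |x' t| ≤ V := by
    refine ⟨Real.sqrt (2 * (E 0 - m)) + 1, by have := Real.sqrt_nonneg (2 * (E 0 - m)); linarith, ?_⟩
    intro t ht
    have h1 : x' t * x' t ≤ 2 * (E 0 - m) := by
      have h2 := hE0 t ht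
      have h3 := hmin (x t)
      simp only [hE] at h2 ⊢
      nlinarith
    have h4 : |x' t| = Real.sqrt (x' t * x' t) := (Real.sqrt_mul_self_eq_abs _).symm
    rw [h4]
    have := Real.sqrt_le_sqrt h1
    linarith
  obtain ⟨K2, hK20, hK2⟩ : ∃ K2, 0 < K2 ∧ ∀ t, 0 ≤ t → |x'' t| ≤ K2 := by
    obtain ⟨M, hM⟩ := (isCompact_Icc (a := -R) (b := R)).exists_bound_of_continuousOn
      hf'c.continuousOn
    have hVp : (0:ℝ) < V ^ (p - 2) := Real.rpow_pos_of_pos (by linarith) _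
    refine ⟨V ^ (p - 2) * V + |M| + 1, by positivity, ?_⟩
    intro t ht
    have h1 : x'' t = -(|x' t| ^ (p - 2) * x' t) - deriv f (x t) := by
      have := heq t ht
      linarith
    have h2 : |x' t| ^ (p - 2) ≤ V ^ (p - 2) :=
      Real.rpow_le_rpow (abs_nonneg _) (hVx t ht) (by linarith)
    have h3 : |deriv f (x t)| ≤ M := by
      have := hM (x t) (abs_le.1 (hRx t ht))
      rwa [Real.norm_eq_abs] at this
    have h4 : |(|x' t| ^ (p - 2) * x' t)| ≤ V ^ (p - 2) * V := by
      rw [abs_mul, abs_of_nonneg (Real.rpow_nonneg (abs_nonneg _) _)]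
      exact mul_le_mul h2 (hVx t ht) (abs_nonneg _) hVp.le
    rw [h1]
    have h5 := abs_sub (-(|x' t| ^ (p - 2) * x' t)) (deriv f (x t))
    have h6 : |(-(|x' t| ^ (p - 2) * x' t))| = |(|x' t| ^ (p - 2) * x' t)| := abs_neg _
    have h7 := le_abs_self M
    calc |(-(|x' t| ^ (p - 2) * x' t) - deriv f (x t))|
        ≤ |(-(|x' t| ^ (p - 2) * x' t))| + |deriv f (x t)| := abs_sub _ _
      _ ≤ V ^ (p - 2) * V + |M| + 1 := by rw [h6]; linarith
  have hx'0 : Tendsto x' atTop (𝓝 0) := by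
    rw [Metric.tendsto_atTop]
    by_contra hcon
    push_neg at hcon
    obtain ⟨ε, hε, hfr⟩ := hcon
    set δ := ε / (2 * K2) with hδdef
    have hδ0 : 0 < δ := by positivity
    have hcp : 0 < (ε/2) ^ p := Real.rpow_pos_of_pos (by positivity) _
    set c0 := δ * (ε/2) ^ p with hc0def
    have hc00 : 0 < c0 := by positivity
    have step : ∀ t, 0 ≤ t → ε ≤ |x' t| → E (t + δ) ≤ E t - c0 := by
      intro t ht hεt
      have hsub : Icc t (t + δ) ⊆ Ici (0:ℝ) := fun u hu => le_trans ht hu.1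
      have hlow : ∀ u ∈ Icc t (t + δ), ε/2 ≤ |x' u| := by
        intro u hu
        have hb := norm_image_sub_le_of_norm_deriv_le_segment'
          (f := x') (f' := x'') (a := t) (b := t + δ) (C := K2)
          (fun v hv => (hx' v (hsub hv)).mono hsub)
          (fun v hv => by rw [Real.norm_eq_abs]; exact hK2 v (hsub (Ico_subset_Icc_self hv)))
          u hu
        rw [Real.norm_eq_abs] at hb
        have h1 : K2 * (u - t) ≤ K2 * δ := by nlinarith [hu.2, hu.1]
        have hKδ : K2 * δ = ε/2 := by
          rw [hδdef]; field_simp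
        have h2 := abs_sub_abs_le_abs_sub (x' t) (x' u)
        rw [abs_sub_comm] at h2
        linarith
      have hanti2 : AntitoneOn (fun u => E u + (ε/2) ^ p * u) (Icc t (t + δ)) := by
        apply helperAnti (g' := fun u => -(|x' u| ^ p) + (ε/2) ^ p * 1) (convex_Icc _ _)
        · intro u hu
          exact ((hEd u (hsub hu)).mono hsub).add
            ((hasDerivWithinAt_id u _).const_mul ((ε/2) ^ p))
        · intro u hu
          rw [interior_Icc] at hu
          have h1 : (ε/2) ^ p ≤ |x' u| ^ p :=
            Real.rpow_le_rpow (by positivity) (hlow u (Ioo_subset_Icc_self hu)) (by linarith)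
          linarith
      have h1 := hanti2 (left_mem_Icc.2 (by linarith)) (right_mem_Icc.2 (by linarith))
        (by linarith : t ≤ t + δ)
      have h2 : (ε/2) ^ p * (t + δ) = (ε/2) ^ p * t + (ε/2) ^ p * δ := by ring
      rw [hc0def]
      nlinarith [h1]
    choose g hg1 hg2 using hfr
    have hg2' : ∀ N, ε ≤ |x' (g N)| := by
      intro N
      have := hg2 N
      rwa [Real.dist_eq, sub_zero] at this
    set u : ℕ → ℝ := fun n => Nat.rec (g 0) (fun _ prev => g (prev + δ)) n with hu
    have husucc : ∀ n, u (n + 1) = g (u n + δ) := fun n => rfl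
    have hupos : ∀ n, 0 ≤ u n := by
      intro n
      induction n with
      | zero => exact hg1 0
      | succ k ih =>
        rw [husucc]
        have := hg1 (u k + δ)
        linarith
    have hkey : ∀ n : ℕ, E (u n + δ) ≤ E 0 - (n + 1 : ℝ) * c0 := by
      intro n
      induction n with
      | zero =>
        have h1 := step (u 0) (hupos 0) (hg2' 0)
        have h2 : E (u 0) ≤ E 0 := hE0 (u 0) (hupos 0)
        push_cast
        linarith
      | succ k ih =>
        have h1 := step (u (k + 1)) (hupos (k + 1)) (by rw [husucc]; exact hg2' (u k + δ))
        have h2 : E (u (k + 1)) ≤ E (u k + δ) := by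
          apply hEanti
          · exact le_trans (hupos k) (by linarith)
          · exact hupos (k + 1)
          · rw [husucc]; exact hg1 (u k + δ)
        push_cast
        push_cast at ih
        linarith
    obtain ⟨n, hn⟩ := exists_nat_gt ((E 0 - m) / c0)
    have h1 := hkey n
    have h2 := hmE (u n + δ) (by linarith [hupos n])
    rw [div_lt_iff₀ hc00] at hn
    nlinarith
  obtain ⟨Einf, hEtend, hmEinf⟩ : ∃ e, Tendsto E atTop (𝓝 e) ∧ m ≤ e := by
    set Et : ℝ → ℝ := fun t => E (max t 0) with hEtdef
    have hEtanti : Antitone Et := by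
      intro t s hts
      exact hEanti (le_max_right t 0) (le_max_right s 0) (max_le_max hts le_rfl)
    have hbdd : BddBelow (range Et) := by
      refine ⟨m, ?_⟩
      rintro y ⟨t, rfl⟩
      exact hmE _ (le_max_right t 0)
    have h1 : Tendsto Et atTop (𝓝 (⨅ i, Et i)) := tendsto_atTop_ciInf hEtanti hbdd
    have h2 : Et =ᶠ[atTop] E := by
      filter_upwards [eventually_ge_atTop (0:ℝ)] with t ht
      simp [hEtdef, max_eq_left ht]
    exact ⟨⨅ i, Et i, Filter.Tendsto.congr' h2 h1, le_ciInf fun i => hmE _ (le_max_right i 0)⟩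
  have hfxt : Tendsto (fun t => f (x t)) atTop (𝓝 Einf) := by
    have h1 : Tendsto (fun t => E t - x' t * x' t / 2) atTop (𝓝 (Einf - 0 * 0 / 2)) :=
      hEtend.sub ((hx'0.mul hx'0).div_const 2)
    have h2 : (fun t => E t - x' t * x' t / 2) = fun t => f (x t) := by
      funext t; simp only [hE]; ring
    rw [h2] at h1
    simpa using h1
  have hEinfm : Einf = m := by
    by_contra hne
    have hlt : m < Einf := lt_of_le_of_ne hmEinf (Ne.symm hne)
    set η := (Einf - m) / 2 with hηdef
    have hη0 : 0 < η := by simp only [hηdef]; linarith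
    have hev1 : ∀ᶠ t in atTop, m + η < f (x t) :=
      hfxt.eventually (eventually_gt_nhds (by simp only [hηdef]; linarith))
    obtain ⟨T₁', hT₁'⟩ := eventually_atTop.1 hev1
    set T₁ := max T₁' 0 with hT₁def
    have hT₁0 : (0:ℝ) ≤ T₁ := le_max_right _ _
    have hT₁ : ∀ t, T₁ ≤ t → m + η < f (x t) :=
      fun t ht => hT₁' t (le_trans (le_max_left _ _) ht)
    have hout : ∀ t, T₁ ≤ t → x t ∉ Icc a b := by
      intro t ht hmem
      have h1 := hfz _ hmem
      have h2 := hT₁ t ht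
      linarith
    have himg : x '' Ici T₁ ⊆ Iio a ∪ Ioi b := by
      rintro _ ⟨t, ht, rfl⟩
      rcases lt_or_ge (x t) a with h | h
      · exact Or.inl h
      rcases le_or_gt (x t) b with h2 | h2
      · exact absurd ⟨h, h2⟩ (hout t ht)
      · exact Or.inr h2
    have hpc : IsPreconnected (x '' Ici T₁) :=
      (isPreconnected_Ici).image x (hxc.mono (fun u hu => le_trans hT₁0 hu))
    have hdisj : Disjoint (Iio a) (Ioi b) := by
      rw [Set.disjoint_left]
      intro z hz hz2
      simp only [mem_Iio, mem_Ioi] at hz hz2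
      linarith
    -- eventually the velocity term is small
    have hsmall : ∀ c₀ : ℝ, 0 < c₀ → ∀ᶠ t in atTop, |x' t| ^ (p - 1) ≤ c₀ / 2 := by
      intro c₀ hc₀0
      have habs : Tendsto (fun t => |x' t|) atTop (𝓝 0) := by simpa using hx'0.abs
      have h01 : ∀ᶠ t in atTop, |x' t| ≤ min 1 (c₀ / 2) :=
        habs.eventually (eventually_le_nhds (by positivity))
      filter_upwards [h01] with t ht
      rcases eq_or_lt_of_le (abs_nonneg (x' t)) with h0 | h0
      · rw [← h0, Real.zero_rpow (by intro h; linarith [h] : p - 1 ≠ 0)]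
        positivity
      · have h1 : |x' t| ^ (p - 1) ≤ |x' t| ^ (1:ℝ) :=
          Real.rpow_le_rpow_of_exponent_ge h0 (le_trans ht (min_le_left _ _)) (by linarith)
        rw [Real.rpow_one] at h1
        exact le_trans h1 (le_trans ht (min_le_right _ _))
    have hev3 : ∀ᶠ t in atTop, -1 < x' t ∧ x' t < 1 := by
      have h1 := hx'0.eventually (eventually_gt_nhds (by norm_num : (-1:ℝ) < 0))
      have h2 := hx'0.eventually (eventually_lt_nhds (by norm_num : (0:ℝ) < 1))
      exact h1.and h2
    rcases hpc.subset_or_subset isOpen_Iio isOpen_Ioi hdisj himg with hL | hR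
    · -- x t < a for t ≥ T₁
      have hxlt : ∀ t, T₁ ≤ t → x t < a := fun t ht => hL ⟨t, ht, rfl⟩
      set c₀ := η / (R + |a| + 1) with hc₀def
      have hc₀0 : 0 < c₀ := by positivity
      have hslope : ∀ t, T₁ ≤ t → deriv f (x t) ≤ -c₀ := by
        intro t ht
        have hax : x t < a := hxlt t ht
        have hs := hconv.deriv_le_slope (mem_univ (x t)) (mem_univ a) hax
          (hfd (x t))
        rw [slope_def_field] at hs
        have h1 : η ≤ f (x t) - m := by have := hT₁ t ht; linarith
        have h2 : 0 < a - x t := by linarith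
        have h3 : a - x t ≤ R + |a| + 1 := by
          have h4 := hRx t (le_trans hT₁0 ht)
          have h5 : -R ≤ x t := by have := neg_abs_le (x t); linarith
          have h6 : a ≤ |a| := le_abs_self a
          linarith
        have h7 : (f a - f (x t)) / (a - x t) ≤ -c₀ := by
          rw [div_le_iff₀ h2]
          have h8 : -c₀ * (a - x t) ≥ -c₀ * (R + |a| + 1) := by nlinarith
          have h9 : -c₀ * (R + |a| + 1) = -η := by
            rw [hc₀def]; field_simp
          rw [← hm]
          nlinarith
        exact le_trans hs h7
      obtain ⟨T₂', hT₂'⟩ := eventually_atTop.1 (hsmall c₀ hc₀0)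
      set T₂ := max T₂' T₁ with hT₂def
      have hT₂T₁ : T₁ ≤ T₂ := le_max_right _ _
      have hT₂0 : (0:ℝ) ≤ T₂ := le_trans hT₁0 hT₂T₁
      have hx''pos : ∀ t, T₂ ≤ t → c₀ / 2 ≤ x'' t := by
        intro t ht
        have ht1 : T₁ ≤ t := le_trans hT₂T₁ ht
        have ht0 : (0:ℝ) ≤ t := le_trans hT₁0 ht1
        have he := heq t ht0
        have habs2 : |(|x' t| ^ (p - 2) * x' t)| = |x' t| ^ (p - 1) := by
          rw [abs_mul, abs_of_nonneg (Real.rpow_nonneg (abs_nonneg _) _), rpow_abs_mul_abs hp2]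
        have h2 : |x' t| ^ (p - 1) ≤ c₀ / 2 := hT₂' t (le_trans (le_max_left _ _) ht)
        have h3 : deriv f (x t) ≤ -c₀ := hslope t ht1
        have h4 : |x' t| ^ (p - 2) * x' t ≤ c₀ / 2 := by
          have h5 := le_abs_self (|x' t| ^ (p - 2) * x' t)
          rw [habs2] at h5
          linarith
        linarith
      have hmono3 : MonotoneOn (fun t => x' t - (c₀ / 2) * t) (Ici T₂) := by
        apply helperMono (g' := fun t => x'' t - c₀ / 2 * 1) (convex_Ici T₂)
        · intro t ht
          have hsub : Ici T₂ ⊆ Ici (0:ℝ) := Ici_subset_Ici.2 hT₂0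
          exact ((hx' t (hsub ht)).mono hsub).sub
            ((hasDerivWithinAt_id t _).const_mul (c₀ / 2))
        · intro t ht
          rw [interior_Ici] at ht
          have := hx''pos t (le_of_lt ht)
          linarith
      obtain ⟨T₃', hT₃'⟩ := eventually_atTop.1 hev3
      set t₀ := max T₃' (T₂ + (|x' T₂| + 2) * (2 / c₀)) with ht₀def
      have ht₀T₂ : T₂ ≤ t₀ := by
        have h1 : (0:ℝ) ≤ (|x' T₂| + 2) * (2 / c₀) := by positivity
        have := le_max_right T₃' (T₂ + (|x' T₂| + 2) * (2 / c₀))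
        linarith
      have hA := (hT₃' t₀ (le_max_left _ _)).2
      have hB := hmono3 (self_mem_Ici) (ht₀T₂ : t₀ ∈ Ici T₂) ht₀T₂
      simp only at hB
      -- x' T₂ - c₀/2 * T₂ ≤ x' t₀ - c₀/2 * t₀
      have hc : c₀ / 2 * (t₀ - T₂) ≥ c₀ / 2 * ((|x' T₂| + 2) * (2 / c₀)) := by
        have h2 := le_max_right T₃' (T₂ + (|x' T₂| + 2) * (2 / c₀))
        nlinarith [h2, hc₀0]
      have hd : c₀ / 2 * ((|x' T₂| + 2) * (2 / c₀)) = |x' T₂| + 2 := by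
        field_simp
      have he2 : x' T₂ ≥ -|x' T₂| := neg_abs_le (x' T₂)
      nlinarith
    · -- b < x t for t ≥ T₁
      have hxgt : ∀ t, T₁ ≤ t → b < x t := fun t ht => hR ⟨t, ht, rfl⟩
      set c₀ := η / (R + |b| + 1) with hc₀def
      have hc₀0 : 0 < c₀ := by positivity
      have hslope : ∀ t, T₁ ≤ t → c₀ ≤ deriv f (x t) := by
        intro t ht
        have hbx : b < x t := hxgt t ht
        have hs := hconv.slope_le_deriv (mem_univ b) (mem_univ (x t)) hbx
          (hfd (x t))
        rw [slope_def_field] at hs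
        have hfb : f b = m := hfz b ⟨hab.le, le_rfl⟩
        have h1 : η ≤ f (x t) - f b := by have := hT₁ t ht; rw [hfb]; linarith
        have h2 : 0 < x t - b := by linarith
        have h3 : x t - b ≤ R + |b| + 1 := by
          have h4 := hRx t (le_trans hT₁0 ht)
          have h5 : x t ≤ R := le_trans (le_abs_self _) h4
          have h6 : -|b| ≤ b := neg_abs_le b
          linarith
        have h7 : c₀ ≤ (f (x t) - f b) / (x t - b) := by
          rw [le_div_iff₀ h2]
          have h9 : c₀ * (R + |b| + 1) = η := by
            rw [hc₀def]; field_simp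
          nlinarith
        exact le_trans h7 hs
      obtain ⟨T₂', hT₂'⟩ := eventually_atTop.1 (hsmall c₀ hc₀0)
      set T₂ := max T₂' T₁ with hT₂def
      have hT₂T₁ : T₁ ≤ T₂ := le_max_right _ _
      have hT₂0 : (0:ℝ) ≤ T₂ := le_trans hT₁0 hT₂T₁
      have hx''neg : ∀ t, T₂ ≤ t → x'' t ≤ -(c₀ / 2) := by
        intro t ht
        have ht1 : T₁ ≤ t := le_trans hT₂T₁ ht
        have ht0 : (0:ℝ) ≤ t := le_trans hT₁0 ht1
        have he := heq t ht0
        have habs2 : |(|x' t| ^ (p - 2) * x' t)| = |x' t| ^ (p - 1) := by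
          rw [abs_mul, abs_of_nonneg (Real.rpow_nonneg (abs_nonneg _) _), rpow_abs_mul_abs hp2]
        have h2 : |x' t| ^ (p - 1) ≤ c₀ / 2 := hT₂' t (le_trans (le_max_left _ _) ht)
        have h3 : c₀ ≤ deriv f (x t) := hslope t ht1
        have h4 : -(c₀ / 2) ≤ |x' t| ^ (p - 2) * x' t := by
          have h5 := neg_abs_le (|x' t| ^ (p - 2) * x' t)
          rw [habs2] at h5
          linarith
        linarith
      have hanti3 : AntitoneOn (fun t => x' t + (c₀ / 2) * t) (Ici T₂) := by
        apply helperAnti (g' := fun t => x'' t + c₀ / 2 * 1) (convex_Ici T₂)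
        · intro t ht
          have hsub : Ici T₂ ⊆ Ici (0:ℝ) := Ici_subset_Ici.2 hT₂0
          exact ((hx' t (hsub ht)).mono hsub).add
            ((hasDerivWithinAt_id t _).const_mul (c₀ / 2))
        · intro t ht
          rw [interior_Ici] at ht
          have := hx''neg t (le_of_lt ht)
          linarith
      obtain ⟨T₃', hT₃'⟩ := eventually_atTop.1 hev3
      set t₀ := max T₃' (T₂ + (|x' T₂| + 2) * (2 / c₀)) with ht₀def
      have ht₀T₂ : T₂ ≤ t₀ := by
        have h1 : (0:ℝ) ≤ (|x' T₂| + 2) * (2 / c₀) := by positivity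
        have := le_max_right T₃' (T₂ + (|x' T₂| + 2) * (2 / c₀))
        linarith
      have hA := (hT₃' t₀ (le_max_left _ _)).1
      have hB := hanti3 (self_mem_Ici) (ht₀T₂ : t₀ ∈ Ici T₂) ht₀T₂
      simp only at hB
      have hc : c₀ / 2 * (t₀ - T₂) ≥ c₀ / 2 * ((|x' T₂| + 2) * (2 / c₀)) := by
        have h2 := le_max_right T₃' (T₂ + (|x' T₂| + 2) * (2 / c₀))
        nlinarith [h2, hc₀0]
      have hd : c₀ / 2 * ((|x' T₂| + 2) * (2 / c₀)) = |x' T₂| + 2 := by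
        field_simp
      have he2 : x' T₂ ≤ |x' T₂| := le_abs_self (x' T₂)
      nlinarith
  rw [hEinfm] at hfxt
  have hbddA : IsBoundedUnder (· ≤ ·) atTop x := by
    apply isBoundedUnder_of_eventually_le (a := R)
    filter_upwards [eventually_ge_atTop (0:ℝ)] with t ht
    exact le_trans (le_abs_self _) (hRx t ht)
  have hbddB : IsBoundedUnder (· ≥ ·) atTop x := by
    apply isBoundedUnder_of_eventually_ge (a := -R)
    filter_upwards [eventually_ge_atTop (0:ℝ)] with t ht
    have := hRx t ht
    have := neg_abs_le (x t)
    linarith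
  have hcl : ∀ L : ℝ, MapClusterPt L atTop x → L ∈ Icc a b := by
    intro L hL
    have h1 : MapClusterPt (f L) atTop (f ∘ x) := hL.continuousAt_comp hfc.continuousAt
    have h2 : f L = m := by
      have h3 : map (f ∘ x) atTop ≤ 𝓝 m := hfxt
      have h4 : NeBot (𝓝 (f L) ⊓ map (f ∘ x) atTop) := h1
      have h5 : NeBot (𝓝 (f L) ⊓ 𝓝 m) := h4.mono (inf_le_inf_left _ h3)
      exact eq_of_nhds_neBot h5
    have h6 : L ∈ {z : ℝ | ∀ y, f z ≤ f y} := fun y => h2 ▸ hmin y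
    rwa [hargmin] at h6
  set A := liminf x atTop with hAdef
  set B := limsup x atTop with hBdef
  have hABle : A ≤ B := liminf_le_limsup hbddA hbddB
  have hBcl : MapClusterPt B atTop x := by
    rw [mapClusterPt_iff_frequently]
    intro s hs
    obtain ⟨ε, hε0, hball⟩ := Metric.mem_nhds_iff.1 hs
    have h1 : ∃ᶠ t in atTop, B - ε < x t :=
      frequently_lt_of_lt_limsup hbddB.isCoboundedUnder_le (by linarith)
    have h2 : ∀ᶠ t in atTop, x t < B + ε :=
      eventually_lt_of_limsup_lt (by linarith) hbddA
    apply (h1.and_eventually h2).mono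
    rintro t ⟨ha1, hb1⟩
    apply hball
    rw [Metric.mem_ball, Real.dist_eq, abs_lt]
    constructor <;> linarith
  have hAcl : MapClusterPt A atTop x := by
    rw [mapClusterPt_iff_frequently]
    intro s hs
    obtain ⟨ε, hε0, hball⟩ := Metric.mem_nhds_iff.1 hs
    have h1 : ∃ᶠ t in atTop, x t < A + ε :=
      frequently_lt_of_liminf_lt hbddA.isCoboundedUnder_ge (by linarith)
    have h2 : ∀ᶠ t in atTop, A - ε < x t :=
      eventually_lt_of_lt_liminf (by linarith) hbddB
    apply (h1.and_eventually h2).mono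
    rintro t ⟨ha1, hb1⟩
    apply hball
    rw [Metric.mem_ball, Real.dist_eq, abs_lt]
    constructor <;> linarith
  rcases eq_or_lt_of_le hABle with hABeq | hABlt
  · exact ⟨B, hcl B hBcl, tendsto_of_liminf_eq_limsup hABeq rfl hbddA hbddB⟩
  exfalso
  have hAm : A ∈ Icc a b := hcl A hAcl
  have hBm : B ∈ Icc a b := hcl B hBcl
  set q := 3 - p with hqdef
  have hq0 : 0 < q := by simp only [hqdef]; linarith
  set c := A + (B - A) / 3 with hcdef
  set d := B - (B - A) / 3 with hddef
  have hcd : c < d := by simp only [hcdef, hddef]; linarith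
  have hcI : Icc c d ⊆ Icc a b := by
    apply Icc_subset_Icc
    · simp only [hcdef]; linarith [hAm.1]
    · simp only [hddef]; linarith [hBm.2]
  set Δ := d - c with hΔdef
  have hΔ0 : 0 < Δ := by simp only [hΔdef]; linarith
  set v₀ := (q * (Δ / 2)) ^ q⁻¹ with hv₀def
  have hv₀0 : 0 < v₀ := Real.rpow_pos_of_pos (by positivity) _
  have hv₀q : v₀ ^ q = q * (Δ / 2) := Real.rpow_inv_rpow (by positivity) hq0.ne'
  have hvev : ∀ᶠ t in atTop, |x' t| < v₀ := by
    have habs : Tendsto (fun t => |x' t|) atTop (𝓝 0) := by simpa using hx'0.abs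
    exact habs.eventually (eventually_lt_nhds hv₀0)
  obtain ⟨T', hT'⟩ := eventually_atTop.1 hvev
  set T := max T' 1 with hTdef
  have hT1 : (1:ℝ) ≤ T := le_max_right _ _
  have hTv : ∀ t, T ≤ t → |x' t| < v₀ := fun t ht => hT' t (le_trans (le_max_left _ _) ht)
  have hfr1 : ∃ᶠ t in atTop, x t < c :=
    frequently_lt_of_liminf_lt hbddA.isCoboundedUnder_ge (by simp only [hcdef]; linarith)
  have hfr2 : ∃ᶠ t in atTop, d < x t :=
    frequently_lt_of_lt_limsup hbddB.isCoboundedUnder_le (by simp only [hddef]; linarith)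
  obtain ⟨s₁, hs₁c, hs₁T⟩ := (hfr1.and_eventually (eventually_ge_atTop T)).exists
  obtain ⟨s₂, hs₂d, hs₂m⟩ := (hfr2.and_eventually (eventually_ge_atTop (max s₁ T))).exists
  have hs12 : s₁ ≤ s₂ := le_trans (le_max_left _ _) hs₂m
  have hs₁0 : (0:ℝ) < s₁ := lt_of_lt_of_le (lt_of_lt_of_le one_pos hT1) hs₁T
  have hIcc0 : Icc s₁ s₂ ⊆ Ici (0:ℝ) := fun u hu => le_trans hs₁0.le hu.1
  obtain ⟨s, s', hss₁, hss', hs's₂, hxs, hxs', hrange⟩ :=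
    crossing hs12 (hxc.mono hIcc0) hcd hs₁c hs₂d
  have hsT : T ≤ s := le_trans hs₁T hss₁
  have hs0 : (0:ℝ) < s := lt_of_lt_of_le (lt_of_lt_of_le one_pos hT1) hsT
  have hIccsub : Icc s s' ⊆ Ici (0:ℝ) := fun u hu => le_trans hs0.le hu.1
  have hode : ∀ t ∈ Icc s s', x'' t = -(|x' t| ^ (p - 2) * x' t) := by
    intro t ht
    have h1 := heq t (hIccsub ht)
    have h2 : deriv f (x t) = 0 := hf'0 _ (hcI (hrange t ht))
    linarith
  have hsqa : AntitoneOn (fun t => x' t * x' t) (Icc s s') := by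
    apply helperAnti' (g' := fun t => x'' t * x' t + x' t * x'' t) (convex_Icc _ _)
    · exact ((hx'c.mono hIccsub).mul (hx'c.mono hIccsub))
    · intro t ht
      rw [interior_Icc] at ht
      have hta : HasDerivAt x' (x'' t) t :=
        (hx' t (hIccsub (Ioo_subset_Icc_self ht))).hasDerivAt
          (Ici_mem_nhds (lt_of_lt_of_le hs0 ht.1.le))
      exact hta.mul hta
    · intro t ht
      rw [interior_Icc] at ht
      have h1 := hode t (Ioo_subset_Icc_self ht)
      have h2 : x'' t * x' t + x' t * x'' t = -(2 * (|x' t| ^ (p - 2) * (x' t * x' t))) := by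
        rw [h1]; ring
      rw [h2, rpow_abs_mul_self hp2]
      have := Real.rpow_nonneg (abs_nonneg (x' t)) p
      linarith
  have main : ∀ τ, s < τ → τ ≤ s' → x τ = d → (∀ t ∈ Ico s τ, x' t ≠ 0) → False := by
    intro τ hsτ hτs' hxτ hnz
    have hsubI : Icc s τ ⊆ Icc s s' := Icc_subset_Icc le_rfl hτs'
    have hsub0 : Icc s τ ⊆ Ici (0:ℝ) := fun u hu => hIccsub (hsubI hu)
    have hxτc : ContinuousOn x (Icc s τ) := hxc.mono hsub0
    have hxder : ∀ t ∈ Ioo s τ, HasDerivAt x (x' t) t := by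
      intro t ht
      exact (hx t (hsub0 (Ioo_subset_Icc_self ht))).hasDerivAt
        (Ici_mem_nhds (lt_of_lt_of_le hs0 ht.1.le))
    obtain ⟨ζ, hζmem, hζ⟩ := exists_hasDerivAt_eq_slope x x' hsτ hxτc hxder
    have hζpos : 0 < x' ζ := by
      rw [hζ, hxs, hxτ]
      apply div_pos (by linarith) (by linarith)
    have hx'cτ : ContinuousOn x' (Icc s τ) := hx'c.mono hsub0
    have hpos : ∀ t ∈ Ico s τ, 0 < x' t := by
      intro t ht
      rcases lt_trichotomy (x' t) 0 with hneg | h0 | hposs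
      · exfalso
        rcases lt_or_ge t ζ with htζ | hζt
        · have hsub2 : Icc t ζ ⊆ Icc s τ := Icc_subset_Icc ht.1 hζmem.2.le
          have := intermediate_value_Ioo htζ.le (hx'cτ.mono hsub2)
          have h0mem : (0:ℝ) ∈ Ioo (x' t) (x' ζ) := ⟨hneg, hζpos⟩
          obtain ⟨z, hz, hz0⟩ := this h0mem
          exact hnz z ⟨le_trans ht.1 hz.1.le, lt_trans hz.2 hζmem.2⟩ hz0
        · have hζt' : ζ < t := by
            rcases eq_or_lt_of_le hζt with he | hl
            · exfalso; rw [he] at hζpos; linarith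
            · exact hl
          have hsub2 : Icc ζ t ⊆ Icc s τ := Icc_subset_Icc hζmem.1.le ht.2.le
          have := intermediate_value_Ioo' hζt'.le (hx'cτ.mono hsub2)
          have h0mem : (0:ℝ) ∈ Ioo (x' t) (x' ζ) := ⟨hneg, hζpos⟩
          obtain ⟨z, hz, hz0⟩ := this h0mem
          exact hnz z ⟨le_trans hζmem.1.le hz.1.le, lt_trans hz.2 ht.2⟩ hz0
      · exact absurd h0 (hnz t ht)
      · exact hposs
    have hcore := core_psi hp2 hp3 hsτ
      (fun t ht => (hx t (hsub0 ht)).mono hsub0)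
      (fun t ht => (hx' t (hsub0 ht)).mono hsub0)
      (fun t ht => hode t (hsubI ht)) hpos hxs hxτ
    have h1 : |x' s| ^ q ≤ v₀ ^ q :=
      Real.rpow_le_rpow (abs_nonneg _) (hTv s hsT).le hq0.le
    rw [hv₀q] at h1
    have h2 : |x' s| ^ (3 - p) / (3 - p) ≤ Δ / 2 := by
      rw [show (3 - p) = q from rfl]
      rw [div_le_iff₀ hq0]
      calc |x' s| ^ q ≤ q * (Δ / 2) := h1
        _ = Δ / 2 * q := by ring
    have h4 : Δ ≤ Δ / 2 := by
      rw [← show d - c = Δ from rfl]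
      exact le_trans hcore h2
    linarith
  set Z := {t ∈ Icc s s' | x' t = 0} with hZdef
  rcases Z.eq_empty_or_nonempty with hZe | hZne
  · apply main s' hss' le_rfl hxs'
    intro t ht h0
    have : t ∈ Z := ⟨⟨ht.1, ht.2.le⟩, h0⟩
    rw [hZe] at this
    exact this
  · have hZcl : IsClosed Z := by
      show IsClosed (Icc s s' ∩ x' ⁻¹' {0})
      exact (hx'c.mono hIccsub).preimage_isClosed_of_isClosed isClosed_Icc isClosed_singleton
    have hZbdd : BddBelow Z := ⟨s, fun t ht => ht.1.1⟩
    set τ₀ := sInf Z with hτ₀def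
    have hτ₀ : τ₀ ∈ Z := hZcl.csInf_mem hZne hZbdd
    have hzero : ∀ t ∈ Icc τ₀ s', x' t = 0 := by
      intro t ht
      have h1 : x' t * x' t ≤ x' τ₀ * x' τ₀ :=
        hsqa hτ₀.1 ⟨le_trans hτ₀.1.1 ht.1, ht.2⟩ ht.1
      rw [hτ₀.2] at h1
      nlinarith [mul_self_nonneg (x' t)]
    have hconst : ∀ t ∈ Icc τ₀ s', x t = x s' := by
      have hsub0 : Icc τ₀ s' ⊆ Ici (0:ℝ) :=
        fun u hu => hIccsub ⟨le_trans hτ₀.1.1 hu.1, hu.2⟩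
      have hder : ∀ t ∈ interior (Icc τ₀ s'), HasDerivAt x ((fun _ => (0:ℝ)) t) t := by
        intro t ht
        rw [interior_Icc] at ht
        have h1 : HasDerivAt x (x' t) t :=
          (hx t (hsub0 (Ioo_subset_Icc_self ht))).hasDerivAt
            (Ici_mem_nhds (lt_of_lt_of_le hs0 (le_trans hτ₀.1.1 ht.1.le)))
        have h2 : x' t = 0 := hzero t (Ioo_subset_Icc_self ht)
        rwa [h2] at h1
      have hxcc : ContinuousOn x (Icc τ₀ s') := hxc.mono hsub0
      have hm1 : MonotoneOn x (Icc τ₀ s') :=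
        helperMono' (convex_Icc _ _) hxcc hder (fun t _ => le_rfl)
      have hm2 : AntitoneOn x (Icc τ₀ s') :=
        helperAnti' (convex_Icc _ _) hxcc hder (fun t _ => le_rfl)
      intro t ht
      have hs'm : s' ∈ Icc τ₀ s' := ⟨hτ₀.1.2, le_rfl⟩
      exact le_antisymm (hm1 ht hs'm ht.2) (hm2 ht hs'm ht.2)
    have hxτ₀ : x τ₀ = d := by
      rw [hconst τ₀ ⟨le_rfl, hτ₀.1.2⟩, hxs']
    have hsτ₀ : s < τ₀ := by
      rcases eq_or_lt_of_le hτ₀.1.1 with he | h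
      · exfalso
        rw [← he] at hxτ₀
        rw [hxs] at hxτ₀
        exact absurd hxτ₀ hcd.ne
      · exact h
    apply main τ₀ hsτ₀ hτ₀.1.2 hxτ₀
    intro t ht h0
    have : t ∈ Z := ⟨⟨ht.1, le_trans ht.2.le hτ₀.1.2⟩, h0⟩
    exact absurd (csInf_le hZbdd this) (not_le.2 ht.2)
end
end

section
/- Let f : ℝᴺ → ℝ be differentiable with inf f > −∞, let φ : ℝᴺ → [0,∞) be convex and differentiable with φ(0) = 0 and φ(u) ≥ γ‖u‖² for all u ∈ ℝᴺ (γ > 0), and let h > 0. Let (x_n) be a sequence in ℝᴺ such that, setting u_n = (x_{n+1} − x_n)/h, one has u_{n+1} − u_n + h∇φ(u_{n+1}) + h∇f(x_{n+1}) = 0 for all n, and suppose ∇f is L-Lipschitz on a ball containing all iterates x_n. Define W_n = (1/2)‖u_n‖² + f(x_{n+1}). Then for all n: W_{n+1} − W_n + h(γ − Lh/2)‖u_{n+1}‖² ≤ 0. Consequently, if γ > Lh/2, then Σ_n ‖u_n‖² < ∞ and u_n → 0 as n → ∞. -/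
open Set Filter Topology MeasureTheory Metric Bornology
open scoped RealInnerProductSpace NNReal

noncomputable section

section Aux
set_option linter.unusedSectionVars false
variable {E : Type*} [NormedAddCommGroup E] [InnerProductSpace ℝ E] [CompleteSpace E]

lemma inner_gradient' (f : E → ℝ) (x v : E) : ⟪gradient f x, v⟫ = fderiv ℝ f x v := by
  rw [gradient, ← InnerProductSpace.toDual_apply_apply, LinearIsometryEquiv.apply_symm_apply]

lemma line_hasDerivAt (a v : E) (t : ℝ) : HasDerivAt (fun t : ℝ => a + t • v) v t := by
  simpa using ((hasDerivAt_id t).smul_const v).const_add a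

lemma descent_lemma {f : E → ℝ} (hf : Differentiable ℝ f) {L : ℝ≥0} {s : Set E}
    (hs : Convex ℝ s) (hLip : LipschitzOnWith L (gradient f) s) {a b : E}
    (ha : a ∈ s) (hb : b ∈ s) :
    f b ≤ f a + ⟪gradient f a, b - a⟫ + (L : ℝ) / 2 * ‖b - a‖ ^ 2 := by
  set v := b - a with hv
  set g : ℝ → ℝ := fun t =>
    f (a + t • v) - t * ⟪gradient f a, v⟫ - (L : ℝ) / 2 * t ^ 2 * ‖v‖ ^ 2 with hg
  have hgd : ∀ t : ℝ, HasDerivAt g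
      (⟪gradient f (a + t • v), v⟫ - ⟪gradient f a, v⟫ - (L : ℝ) * t * ‖v‖ ^ 2) t := by
    intro t
    have h1 : HasDerivAt (fun t : ℝ => f (a + t • v)) (fderiv ℝ f (a + t • v) v) t :=
      (hf _).hasFDerivAt.comp_hasDerivAt t (line_hasDerivAt a v t)
    rw [← inner_gradient'] at h1
    have h2 : HasDerivAt (fun t : ℝ => t * ⟪gradient f a, v⟫) ⟪gradient f a, v⟫ t := by
      simpa using (hasDerivAt_id t).mul_const (⟪gradient f a, v⟫ : ℝ)
    have h3 : HasDerivAt (fun t : ℝ => (L : ℝ) / 2 * t ^ 2 * ‖v‖ ^ 2)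
        ((L : ℝ) * t * ‖v‖ ^ 2) t := by
      have := ((hasDerivAt_pow 2 t).const_mul ((L : ℝ) / 2)).mul_const (‖v‖ ^ 2)
      refine this.congr_deriv ?_
      ring
    exact (h1.sub h2).sub h3
  have hgdiff : Differentiable ℝ g := fun t => (hgd t).differentiableAt
  have hanti : AntitoneOn g (Set.Icc 0 1) := by
    apply antitoneOn_of_deriv_nonpos (convex_Icc 0 1) hgdiff.continuous.continuousOn
      (fun t _ => (hgdiff t).differentiableWithinAt)
    intro t ht
    rw [interior_Icc] at ht
    rw [(hgd t).deriv]
    have hmem : a + t • v ∈ s := by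
      have h01 : (1 - t) • a + t • b ∈ s :=
        hs ha hb (by linarith [ht.2]) (le_of_lt ht.1) (by ring)
      have : (1 - t) • a + t • b = a + t • v := by
        rw [hv, smul_sub, sub_smul, one_smul]; abel
      rwa [this] at h01
    have hd : dist (gradient f (a + t • v)) (gradient f a) ≤ L * dist (a + t • v) a :=
      hLip.dist_le_mul _ hmem _ ha
    have hdist : dist (a + t • v) a = t * ‖v‖ := by
      rw [dist_eq_norm]
      simp [norm_smul, abs_of_pos ht.1]
    have hinner : ⟪gradient f (a + t • v) - gradient f a, v⟫ ≤
        ‖gradient f (a + t • v) - gradient f a‖ * ‖v‖ := real_inner_le_norm _ _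
    rw [inner_sub_left] at hinner
    rw [dist_eq_norm, hdist] at hd
    nlinarith [norm_nonneg v, norm_nonneg (gradient f (a + t • v) - gradient f a)]
  have key : g 1 ≤ g 0 := hanti (by norm_num) (by norm_num) zero_le_one
  simp only [hg, one_smul, zero_smul, add_zero, one_pow] at key
  have : a + v = b := by rw [hv]; abel
  rw [this] at key
  linarith

lemma convex_grad_ineq {φ : E → ℝ} (hconv : ConvexOn ℝ Set.univ φ)
    (hdiff : Differentiable ℝ φ) (w : E) : φ w - φ 0 ≤ ⟪gradient φ w, w⟫ := by
  set g : ℝ → ℝ := fun t => φ (t • w) with hg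
  have hgconv : ConvexOn ℝ Set.univ g := by
    have := hconv.comp_affineMap (LinearMap.toSpanSingleton ℝ E w).toAffineMap
    exact this
  have hgd : HasDerivAt g ⟪gradient φ w, w⟫ 1 := by
    have hline : HasDerivAt (fun t : ℝ => t • w) w (1 : ℝ) := by
      simpa using (hasDerivAt_id (1 : ℝ)).smul_const w
    have h1 := (hdiff ((1 : ℝ) • w)).hasFDerivAt.comp_hasDerivAt 1 hline
    rw [inner_gradient']
    rw [one_smul] at h1
    exact h1
  have := hgconv.slope_le_of_hasDerivAt (mem_univ (0 : ℝ)) (mem_univ (1 : ℝ)) one_pos hgd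
  simpa [slope, hg] using this

end Aux

/-- **Discrete energy decay (Lemma 8.1).**
For the semi-implicit discretization `u_{n+1} - u_n + h∇φ(u_{n+1}) + h∇f(x_{n+1}) = 0`
of the inertial system (with discrete velocity `u_n = (x_{n+1} - x_n)/h`), if `∇f` is
`L`-Lipschitz on a ball containing all iterates and `φ(u) ≥ γ‖u‖²`, then the discrete
energies `W_n = ½‖u_n‖² + f(x_{n+1})` satisfy
`W_{n+1} - W_n + h(γ - Lh/2)‖u_{n+1}‖² ≤ 0`; consequently, if `γ > Lh/2` then
`Σ‖u_n‖² < ∞` and `u_n → 0`. -/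
theorem discrete_energy_decay
    (N : ℕ) (f : EuclideanSpace ℝ (Fin N) → ℝ)
    (hfdiff : Differentiable ℝ f) (hfbdd : BddBelow (Set.range f))
    (φ : EuclideanSpace ℝ (Fin N) → ℝ)
    (hφconv : ConvexOn ℝ Set.univ φ) (hφdiff : Differentiable ℝ φ) (hφ0 : φ 0 = 0)
    (γ : ℝ) (hγ : 0 < γ)
    (hgrow : ∀ u : EuclideanSpace ℝ (Fin N), γ * ‖u‖ ^ 2 ≤ φ u)
    (h : ℝ) (hh : 0 < h)
    (x u : ℕ → EuclideanSpace ℝ (Fin N))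
    (hu : ∀ n, u n = (1 / h) • (x (n + 1) - x n))
    (hrec : ∀ n, u (n + 1) - u n + h • gradient φ (u (n + 1))
        + h • gradient f (x (n + 1)) = 0)
    (L : ℝ≥0) (ctr : EuclideanSpace ℝ (Fin N)) (R : ℝ)
    (hball : ∀ n, x n ∈ Metric.closedBall ctr R)
    (hLip : LipschitzOnWith L (gradient f) (Metric.closedBall ctr R)) :
    (∀ n, ((1:ℝ)/2 * ‖u (n + 1)‖ ^ 2 + f (x (n + 2)))
        - ((1:ℝ)/2 * ‖u n‖ ^ 2 + f (x (n + 1)))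
        + h * (γ - (L : ℝ) * h / 2) * ‖u (n + 1)‖ ^ 2 ≤ 0) ∧
    ((L : ℝ) * h / 2 < γ →
      Summable (fun n => ‖u n‖ ^ 2) ∧ Tendsto u atTop (𝓝 0)) := by
  -- the step relation
  have hstep : ∀ n, x (n + 1) - x n = h • u n := by
    intro n
    rw [hu n, smul_smul]
    rw [mul_one_div, div_self hh.ne', one_smul]
  set W : ℕ → ℝ := fun n => (1:ℝ)/2 * ‖u n‖ ^ 2 + f (x (n + 1)) with hW
  have part1 : ∀ n, W (n + 1) - W n + h * (γ - (L : ℝ) * h / 2) * ‖u (n + 1)‖ ^ 2 ≤ 0 := by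
    intro n
    set v := u (n + 1) with hv
    -- descent lemma
    have hdesc : f (x (n + 2)) ≤ f (x (n + 1)) + ⟪gradient f (x (n + 1)), x (n + 2) - x (n + 1)⟫
        + (L : ℝ) / 2 * ‖x (n + 2) - x (n + 1)‖ ^ 2 :=
      descent_lemma hfdiff (convex_closedBall ctr R) hLip (hball (n + 1)) (hball (n + 2))
    rw [hstep (n + 1)] at hdesc
    have hns : ‖h • v‖ ^ 2 = h ^ 2 * ‖v‖ ^ 2 := by
      rw [norm_smul, Real.norm_eq_abs, abs_of_pos hh, mul_pow]
    rw [real_inner_smul_right, hns] at hdesc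
    -- inner product of the recursion with v
    have hr := congrArg (fun w => (⟪w, v⟫ : ℝ)) (hrec n)
    simp only [inner_add_left, inner_sub_left, real_inner_smul_left, inner_zero_left] at hr
    -- convexity / growth bound
    have hφb : γ * ‖v‖ ^ 2 ≤ ⟪gradient φ v, v⟫ := by
      have h1 := convex_grad_ineq hφconv hφdiff v
      rw [hφ0, sub_zero] at h1
      exact le_trans (hgrow v) h1
    -- Cauchy-Schwarz / Young
    have hcs : ⟪u n, v⟫ ≤ 1/2 * ‖u n‖ ^ 2 + 1/2 * ‖v‖ ^ 2 := by
      have := real_inner_le_norm (u n) v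
      nlinarith [norm_nonneg (u n), norm_nonneg v, sq_nonneg (‖u n‖ - ‖v‖)]
    have hvv : ⟪v, v⟫ = ‖v‖ ^ 2 := real_inner_self_eq_norm_sq v
    simp only [hW]
    have hgf : (h : ℝ) * ⟪gradient f (x (n + 1)), v⟫
        = -(⟪v, v⟫ - ⟪u n, v⟫) - h * ⟪gradient φ v, v⟫ := by linarith
    nlinarith [mul_le_mul_of_nonneg_left hφb (le_of_lt hh)]
  constructor
  · exact part1
  · intro hlt
    have hc : 0 < h * (γ - (L : ℝ) * h / 2) := mul_pos hh (by linarith)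
    obtain ⟨B, hB⟩ := hfbdd
    have hWlb : ∀ n, B ≤ W n := by
      intro n
      have := hB (Set.mem_range_self (x (n + 1)))
      have := sq_nonneg ‖u n‖
      simp only [hW]
      nlinarith
    have hpsum : ∀ n : ℕ, ∑ k ∈ Finset.range n, ‖u (k + 1)‖ ^ 2
        ≤ (W 0 - B) / (h * (γ - (L : ℝ) * h / 2)) := by
      intro n
      rw [le_div_iff₀ hc]
      calc (∑ k ∈ Finset.range n, ‖u (k + 1)‖ ^ 2) * (h * (γ - (L : ℝ) * h / 2))
          = ∑ k ∈ Finset.range n, h * (γ - (L : ℝ) * h / 2) * ‖u (k + 1)‖ ^ 2 := by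
            rw [Finset.sum_mul]; exact Finset.sum_congr rfl fun k _ => by ring
        _ ≤ ∑ k ∈ Finset.range n, (W k - W (k + 1)) :=
            Finset.sum_le_sum fun k _ => by linarith [part1 k]
        _ = W 0 - W n := Finset.sum_range_sub' W n
        _ ≤ W 0 - B := by linarith [hWlb n]
    have hsum1 : Summable (fun n => ‖u (n + 1)‖ ^ 2) :=
      summable_of_sum_range_le (fun n => sq_nonneg _) hpsum
    have hsum : Summable (fun n => ‖u n‖ ^ 2) := (summable_nat_add_iff 1).mp hsum1
    refine ⟨hsum, ?_⟩
    have h0 : Tendsto (fun n => ‖u n‖ ^ 2) atTop (𝓝 0) := hsum.tendsto_atTop_zero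
    have h1 : Tendsto (fun n => ‖u n‖) atTop (𝓝 0) := by
      have h2 : Tendsto (fun n => Real.sqrt (‖u n‖ ^ 2)) atTop (𝓝 (Real.sqrt 0)) :=
        (Real.continuous_sqrt.tendsto 0).comp h0
      rw [Real.sqrt_zero] at h2
      exact h2.congr fun n => Real.sqrt_sq (norm_nonneg _)
    exact tendsto_zero_iff_norm_tendsto_zero.mpr h1
end
end

section
/- Let H be a real Hilbert space, let γ > 0, and let f : H → ℝ be γ-strongly convex, twice continuously differentiable, with ∇f Lipschitz continuous on every bounded subset of H; let x̄ be its unique minimizer. Let φ : H → [0,∞) be a damping potential which is differentiable with ∇φ Lipschitz continuous on every bounded subset of H, and assume: (i) there exist α > 0 and ε > 0 such that ⟨∇φ(u), u⟩ ≥ α‖u‖² whenever ‖u‖ ≤ ε; (ii) there exist p ≥ 1 and r > 0 such that φ(u) ≥ r‖u‖^p for all u ∈ H. Let β > 0 and let x : [0,∞) → H be a twice continuously differentiable solution of ẍ(t) + ∇φ(ẋ(t) + β∇f(x(t))) + β∇²f(x(t))ẋ(t) + ∇f(x(t)) = 0. Then there exist constants K ≥ 0 and λ > 0 such that for all t ≥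 0: f(x(t)) − f(x̄) ≤ K e^{−λt}, ‖x(t) − x̄‖ ≤ K e^{−λt}, ‖ẋ(t) + β∇f(x(t))‖ ≤ K e^{−λt}, and, as a consequence, ‖ẋ(t)‖ ≤ K e^{−λt} and ‖∇f(x(t))‖ ≤ K e^{−λt}. -/
open Set Filter Topology MeasureTheory Metric Bornology
open scoped RealInnerProductSpace NNReal

noncomputable section

variable {H : Type*} [NormedAddCommGroup H] [InnerProductSpace ℝ H] [CompleteSpace H]

/-- The convex subdifferential of `φ` at `u`. -/
def subdiff (φ : H → ℝ) (u : H) : Set H :=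
  {ξ : H | ∀ v : H, φ u + ⟪ξ, v - u⟫ ≤ φ v}

/-- A damping potential: a nonnegative convex continuous function vanishing (and
minimal) at the origin, whose minimal section of the subdifferential is bounded on
bounded sets (expressed through the existence of subgradients of uniformly bounded
norm). -/
structure IsDampingPotential (φ : H → ℝ) : Prop where
  nonneg : ∀ u, 0 ≤ φ u
  convexOn : ConvexOn ℝ Set.univ φ
  continuous : Continuous φ
  map_zero : φ 0 = 0
  minimalSectionBounded : ∀ R : ℝ, 0 < R →
    ∃ M : ℝ, ∀ u : H, ‖u‖ ≤ R → ∃ ξ ∈ subdiff φ u, ‖ξ‖ ≤ M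

open InnerProductSpace

/-- Subgradient inequality for a differentiable convex function. -/
lemma subgrad_ineq {g : H → ℝ} (hg : ConvexOn ℝ Set.univ g) {x : H}
    (hd : DifferentiableAt ℝ g x) (y : H) :
    g x + ⟪gradient g x, y - x⟫ ≤ g y := by
  set c : ℝ → H := fun s => x + s • (y - x) with hc
  have hlin : ∀ s : ℝ, (AffineMap.lineMap x y : ℝ →ᵃ[ℝ] H) s = c s := by
    intro s; simp [AffineMap.lineMap_apply, hc, add_comm]
  have hconv : ConvexOn ℝ Set.univ (g ∘ c) := by
    have h := hg.comp_affineMap (AffineMap.lineMap x y : ℝ →ᵃ[ℝ] H)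
    have : (g ∘ (AffineMap.lineMap x y : ℝ →ᵃ[ℝ] H)) = g ∘ c := by
      funext s; simp [Function.comp, hlin s]
    rw [this] at h
    simpa using h
  have hcd : HasDerivAt c (y - x) 0 := by
    have h := ((hasDerivAt_id (0:ℝ)).smul_const (y - x)).const_add x
    simp only [id_eq, one_smul] at h
    exact h
  have hc0 : c 0 = x := by simp [hc]
  have h1 : HasFDerivAt g (toDual ℝ H (gradient g x)) x := hd.hasGradientAt.hasFDerivAt
  have hder : HasDerivAt (g ∘ c) ⟪gradient g x, y - x⟫ 0 := by
    have h1' : HasFDerivAt g (toDual ℝ H (gradient g x)) (c 0) := by rwa [hc0]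
    have h2 := h1'.comp_hasDerivAt 0 hcd
    simpa [toDual_apply_apply] using h2
  have hslope := hconv.le_slope_of_hasDerivAt (Set.mem_univ 0) (Set.mem_univ 1) one_pos hder
  have hc1 : c 1 = y := by simp [hc]
  rw [slope_def_field] at hslope
  simp [hc0, hc1] at hslope
  have hfg : ⟪gradient g x, y - x⟫ = fderiv ℝ g x y - fderiv ℝ g x x := by
    rw [gradient, toDual_symm_apply, map_sub]
  linarith

/-- Strong convexity subgradient inequality. -/
lemma strong_subgrad (γ : ℝ) {f : H → ℝ}
    (hsc : ConvexOn ℝ Set.univ (fun y => f y - γ / 2 * ‖y‖ ^ 2))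
    (hfd : Differentiable ℝ f) (x y : H) :
    f x + ⟪gradient f x, y - x⟫ + γ / 2 * ‖y - x‖ ^ 2 ≤ f y := by
  set g : H → ℝ := fun y => f y - γ / 2 * ‖y‖ ^ 2 with hg
  have hgd : DifferentiableAt ℝ g x := by
    apply DifferentiableAt.sub (hfd x)
    exact (((contDiff_norm_sq (𝕜 := ℝ) (E := H) (n := 1)).differentiable one_ne_zero) x).const_mul _
  have hgrad : gradient g x = gradient f x - γ • x := by
    have hq : HasFDerivAt (fun y : H => γ / 2 * ‖y‖ ^ 2) ((γ/2) • (2 • (innerSL ℝ x))) x :=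
      ((hasStrictFDerivAt_norm_sq x).hasFDerivAt).const_mul (γ/2)
    have hF : HasFDerivAt g (toDual ℝ H (gradient f x) - (γ/2) • (2 • (innerSL ℝ x))) x :=
      ((hfd x).hasGradientAt.hasFDerivAt).sub hq
    have heqq : (toDual ℝ H (gradient f x) - (γ/2) • (2 • (innerSL ℝ x)))
        = toDual ℝ H (gradient f x - γ • x) := by
      ext w
      simp [toDual_apply_apply, inner_sub_left, inner_smul_left]
      ring
    rw [heqq] at hF
    rw [hF.hasGradientAt.gradient, LinearIsometryEquiv.symm_apply_apply]
  have h := subgrad_ineq hsc hgd y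
  rw [hgrad] at h
  simp only [hg, inner_sub_left, inner_smul_left] at h
  have hid : ‖y - x‖ ^ 2 = ‖y‖ ^ 2 - 2 * ⟪x, y⟫ + ‖x‖ ^ 2 := by
    rw [norm_sub_sq_real]; ring_nf; rw [real_inner_comm]; ring
  have hxy : ⟪x, y - x⟫ = ⟪x, y⟫ - ‖x‖ ^ 2 := by
    rw [inner_sub_right, real_inner_self_eq_norm_sq]
  simp only [starRingEnd_apply, star_trivial] at h
  rw [hxy] at h
  have hid2 : γ / 2 * ‖y - x‖ ^ 2
      = γ / 2 * ‖y‖ ^ 2 - γ * ⟪x, y⟫ + γ / 2 * ‖x‖ ^ 2 := by rw [hid]; ring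
  linarith


set_option maxHeartbeats 1000000 in
/-- **(ADIGE-VGH) strongly convex case: exponential convergence rates
(Theorem 10.7).**  Let `f` be `γ`-strongly convex (i.e. `f - (γ/2)‖·‖²` convex),
`C²`, with `∇f` Lipschitz on bounded sets and unique minimizer `x̄`; let `φ` be a
differentiable damping potential with `∇φ` Lipschitz on bounded sets satisfying the
local growth `⟪∇φ(u), u⟫ ≥ α‖u‖²` for `‖u‖ ≤ ε` and the global growth
`φ(u) ≥ r‖u‖^p`, and let `β > 0`.  Then every `C²` solution of
`ẍ + ∇φ(ẋ + β∇f(x)) + β∇²f(x)ẋ + ∇f(x) = 0` satisfies exponential convergence rates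
for the values, the distance to `x̄`, `‖ẋ + β∇f(x)‖`, and consequently for `‖ẋ‖` and
`‖∇f(x)‖`. -/
theorem adigeVGH_strongly_convex_exponential_rate
    (γ : ℝ) (hγ : 0 < γ)
    (f : H → ℝ) (hf : ContDiff ℝ 2 f)
    (hsc : ConvexOn ℝ Set.univ (fun y => f y - γ / 2 * ‖y‖ ^ 2))
    (hflip : ∀ s : Set H, IsBounded s → ∃ K : ℝ≥0, LipschitzOnWith K (gradient f) s)
    (xbar : H) (hxbar : ∀ y, f xbar ≤ f y)
    (φ : H → ℝ) (hφ : IsDampingPotential φ) (hφdiff : Differentiable ℝ φ)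
    (hφlip : ∀ s : Set H, IsBounded s → ∃ K : ℝ≥0, LipschitzOnWith K (gradient φ) s)
    (α ε : ℝ) (hα : 0 < α) (hε : 0 < ε)
    (hloc : ∀ u : H, ‖u‖ ≤ ε → α * ‖u‖ ^ 2 ≤ ⟪gradient φ u, u⟫)
    (p r : ℝ) (hp : 1 ≤ p) (hr : 0 < r) (hgrow : ∀ u : H, r * ‖u‖ ^ p ≤ φ u)
    (β : ℝ) (hβ : 0 < β)
    (x x' x'' : ℝ → H)
    (hx : ∀ t ∈ Set.Ici (0:ℝ), HasDerivWithinAt x (x' t) (Set.Ici 0) t)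
    (hx' : ∀ t ∈ Set.Ici (0:ℝ), HasDerivWithinAt x' (x'' t) (Set.Ici 0) t)
    (hx''c : ContinuousOn x'' (Set.Ici 0))
    (heq : ∀ t ∈ Set.Ici (0:ℝ),
        x'' t + gradient φ (x' t + β • gradient f (x t))
          + β • (fderiv ℝ (gradient f) (x t) (x' t)) + gradient f (x t) = 0) :
    ∃ K : ℝ, 0 ≤ K ∧ ∃ lam : ℝ, 0 < lam ∧ ∀ t ∈ Set.Ici (0:ℝ),
      f (x t) - f xbar ≤ K * Real.exp (-lam * t) ∧
      ‖x t - xbar‖ ≤ K * Real.exp (-lam * t) ∧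
      ‖x' t + β • gradient f (x t)‖ ≤ K * Real.exp (-lam * t) ∧
      ‖x' t‖ ≤ K * Real.exp (-lam * t) ∧
      ‖gradient f (x t)‖ ≤ K * Real.exp (-lam * t) := by
  have hfd : Differentiable ℝ f := hf.differentiable (by norm_num)
  have hgradC : ContDiff ℝ 1 (gradient f) := by
    have h1 : ContDiff ℝ 1 (fderiv ℝ f) := hf.fderiv_right (by norm_num)
    exact ((toDual ℝ H).symm.toContinuousLinearEquiv.toContinuousLinearMap.contDiff).comp h1
  have hgd : Differentiable ℝ (gradient f) := hgradC.differentiable one_ne_zero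
  have hgradzero : gradient f xbar = 0 := by
    have hmin : IsLocalMin f xbar := Filter.Eventually.of_forall hxbar
    show (toDual ℝ H).symm (fderiv ℝ f xbar) = 0
    rw [hmin.fderiv_eq_zero]; simp
  set v : ℝ → H := fun t => x' t + β • gradient f (x t) with hvdef
  set v' : ℝ → H := fun t => -(gradient φ (v t) + gradient f (x t)) with hv'def
  have hv : ∀ t ∈ Ici (0:ℝ), HasDerivWithinAt v (v' t) (Ici 0) t := by
    intro t ht
    have h1 : HasDerivWithinAt (fun s => gradient f (x s))
        (fderiv ℝ (gradient f) (x t) (x' t)) (Ici 0) t :=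
      (hgd (x t)).hasFDerivAt.comp_hasDerivWithinAt t (hx t ht)
    have h2 := (hx' t ht).add (h1.const_smul β)
    have h3 : x'' t + β • fderiv ℝ (gradient f) (x t) (x' t) = v' t := by
      have h := heq t ht
      rw [hv'def]
      have h4 : (x'' t + β • fderiv ℝ (gradient f) (x t) (x' t))
          + (gradient φ (v t) + gradient f (x t)) = 0 := by
        rw [← h]; abel
      exact eq_neg_of_add_eq_zero_left h4
    rw [← h3]; exact h2
  -- basic consequences of convexity
  have hphi_low : ∀ u : H, φ u ≤ ⟪gradient φ u, u⟫ := by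
    intro u
    have h := subgrad_ineq hφ.convexOn (hφdiff u) 0
    rw [zero_sub, inner_neg_right, hφ.map_zero] at h
    linarith
  have hphi_nonneg : ∀ u : H, (0:ℝ) ≤ ⟪gradient φ u, u⟫ :=
    fun u => le_trans (hφ.nonneg u) (hphi_low u)
  have hPL : ∀ z : H, 2 * γ * (f z - f xbar) ≤ ‖gradient f z‖ ^ 2 := by
    intro z
    have h := strong_subgrad γ hsc hfd z xbar
    have habs : |⟪gradient f z, xbar - z⟫| ≤ ‖gradient f z‖ * ‖xbar - z‖ :=
      abs_real_inner_le_norm _ _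
    have hneg : -(‖gradient f z‖ * ‖xbar - z‖) ≤ ⟪gradient f z, xbar - z⟫ :=
      neg_le_of_abs_le habs
    nlinarith [sq_nonneg (‖gradient f z‖ - γ * ‖xbar - z‖), norm_nonneg (xbar - z), hγ]
  have hdist : ∀ z : H, γ / 2 * ‖z - xbar‖ ^ 2 ≤ f z - f xbar := by
    intro z
    have h := strong_subgrad γ hsc hfd xbar z
    rw [hgradzero, inner_zero_left] at h
    linarith
  -- the energy function
  set E : ℝ → ℝ := fun t => f (x t) - f xbar + 1/2 * ‖v t‖ ^ 2 with hEdef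
  set E' : ℝ → ℝ := fun t => -(β * ‖gradient f (x t)‖ ^ 2) - ⟪gradient φ (v t), v t⟫ with hE'def
  have hEnonneg : ∀ t : ℝ, 0 ≤ E t := by
    intro t
    have h1 : 0 ≤ f (x t) - f xbar := sub_nonneg.2 (hxbar _)
    have h2 : (0:ℝ) ≤ 1/2 * ‖v t‖ ^ 2 := by positivity
    simp only [hEdef]; linarith
  have hffle : ∀ t : ℝ, f (x t) - f xbar ≤ E t := by
    intro t
    have h2 : (0:ℝ) ≤ 1/2 * ‖v t‖ ^ 2 := by positivity
    simp only [hEdef]; linarith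
  have hvle : ∀ t : ℝ, 1/2 * ‖v t‖ ^ 2 ≤ E t := by
    intro t
    have h1 : 0 ≤ f (x t) - f xbar := sub_nonneg.2 (hxbar _)
    simp only [hEdef]; linarith
  have hE : ∀ t ∈ Ici (0:ℝ), HasDerivWithinAt E (E' t) (Ici 0) t := by
    intro t ht
    have hfx : HasDerivWithinAt (fun s => f (x s)) ⟪gradient f (x t), x' t⟫ (Ici 0) t := by
      have h := (hfd (x t)).hasGradientAt.hasFDerivAt.comp_hasDerivWithinAt t (hx t ht)
      simp only [toDual_apply_apply] at h
      exact h
    have hn := ((hv t ht).norm_sq).const_mul (1/2 : ℝ)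
    have hsum := (hfx.sub_const (f xbar)).add hn
    have hx't : x' t = v t - β • gradient f (x t) := by rw [hvdef]; simp
    have hsum' : HasDerivWithinAt E
        (⟪gradient f (x t), x' t⟫ + 1 / 2 * (2 * ⟪v t, v' t⟫)) (Ici 0) t := hsum
    convert hsum' using 1
    have e1 : ⟪gradient f (x t), x' t⟫
        = ⟪v t, gradient f (x t)⟫ - β * ‖gradient f (x t)‖ ^ 2 := by
      rw [hx't, inner_sub_right, inner_smul_right, real_inner_self_eq_norm_sq,
        real_inner_comm]
    have e2 : ⟪v t, v' t⟫ = -⟪gradient φ (v t), v t⟫ - ⟪v t, gradient f (x t)⟫ := by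
      rw [hv'def]
      simp only [inner_neg_right, inner_add_right]
      rw [real_inner_comm (v t) (gradient φ (v t))]
      ring
    simp only [hE'def]
    rw [e1, e2]; ring
  have hE'le : ∀ t : ℝ, E' t ≤ 0 := by
    intro t
    have h1 := hphi_nonneg (v t)
    have h2 : (0:ℝ) ≤ β * ‖gradient f (x t)‖ ^ 2 := by positivity
    simp only [hE'def]; linarith
  have hEcont : ContinuousOn E (Ici 0) := fun t ht => (hE t ht).continuousWithinAt
  have hEanti : AntitoneOn E (Ici 0) := by
    apply antitoneOn_of_hasDerivWithinAt_nonpos (convex_Ici 0) hEcont (f' := E')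
    · intro t ht
      have ht' : (0:ℝ) < t := by rwa [interior_Ici] at ht
      exact (hE t ht'.le).mono interior_subset
    · intro t _; exact hE'le t
  -- Phase 1 : reach the region where E ≤ L0
  set L0 : ℝ := ε ^ 2 / 2 with hL0def
  have hL0 : 0 < L0 := by positivity
  set δ : ℝ := min (2 * γ * β * (L0 / 2)) (r * (Real.sqrt L0) ^ p) with hδdef
  have hδ : 0 < δ := by
    apply lt_min
    · positivity
    · exact mul_pos hr (Real.rpow_pos_of_pos (Real.sqrt_pos.2 hL0) p)
  have hkey : ∀ t ∈ Ici (0:ℝ), L0 ≤ E t → δ ≤ -(E' t) := by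
    intro t ht hLE
    have h1 := hPL (x t)
    have h2 : r * ‖v t‖ ^ p ≤ ⟪gradient φ (v t), v t⟫ := (hgrow (v t)).trans (hphi_low (v t))
    have hβ1 : β * (2 * γ * (f (x t) - f xbar)) ≤ β * ‖gradient f (x t)‖ ^ 2 :=
      mul_le_mul_of_nonneg_left h1 hβ.le
    have hvp0 : 0 ≤ r * ‖v t‖ ^ p := by positivity
    by_cases hcase : L0 / 2 ≤ f (x t) - f xbar
    · have hm : δ ≤ 2 * γ * β * (L0 / 2) := min_le_left _ _
      have : 2 * γ * β * (L0 / 2) ≤ β * (2 * γ * (f (x t) - f xbar)) := by nlinarith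
      simp only [hE'def]; linarith
    · push_neg at hcase
      have h0 : 0 ≤ f (x t) - f xbar := sub_nonneg.2 (hxbar _)
      have hv2 : L0 ≤ ‖v t‖ ^ 2 := by
        have h5 : L0 ≤ f (x t) - f xbar + 1/2 * ‖v t‖ ^ 2 := hLE
        linarith
      have hvs : Real.sqrt L0 ≤ ‖v t‖ := by
        have h := Real.sqrt_le_sqrt hv2
        rwa [Real.sqrt_sq (norm_nonneg _)] at h
      have hrp : r * (Real.sqrt L0) ^ p ≤ r * ‖v t‖ ^ p :=
        mul_le_mul_of_nonneg_left
          (Real.rpow_le_rpow (Real.sqrt_nonneg _) hvs (by linarith)) hr.le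
      have hm : δ ≤ r * (Real.sqrt L0) ^ p := min_le_right _ _
      have hb : 0 ≤ β * ‖gradient f (x t)‖ ^ 2 := by positivity
      simp only [hE'def]; linarith
  have hT0 : ∃ T ∈ Ici (0:ℝ), E T ≤ L0 := by
    by_contra hcon
    push_neg at hcon
    have hFanti : AntitoneOn (fun t => E t + δ * t) (Ici 0) := by
      apply antitoneOn_of_hasDerivWithinAt_nonpos (convex_Ici 0)
        (f' := fun t => E' t + δ)
      · exact hEcont.add (continuous_const.mul continuous_id).continuousOn
      · intro t ht
        have ht' : (0:ℝ) < t := by rwa [interior_Ici] at ht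
        have hd := ((hE t ht'.le).mono interior_subset).add
          (((hasDerivAt_id t).const_mul δ).hasDerivWithinAt)
        simp at hd
        rw [interior_Ici]; exact hd
      · intro t ht
        have ht' : (0:ℝ) < t := by rwa [interior_Ici] at ht
        have := hkey t ht'.le (hcon t ht'.le).le
        linarith
    set T : ℝ := (E 0 + 1) / δ with hT
    have hE00 : 0 ≤ E 0 := hEnonneg 0
    have hTmem : T ∈ Ici (0:ℝ) := by
      rw [mem_Ici, hT]
      exact div_nonneg (by linarith) hδ.le
    have hFT := hFanti (self_mem_Ici) hTmem (by rwa [mem_Ici] at hTmem)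
    have hδT : δ * T = E 0 + 1 := by
      rw [hT, mul_div_cancel₀ _ (ne_of_gt hδ)]
    simp only at hFT
    have := hEnonneg T
    linarith
  obtain ⟨T₀, hT₀mem, hT₀⟩ := hT0
  have hT₀0 : (0:ℝ) ≤ T₀ := hT₀mem
  -- Phase 2 : exponential decay
  set c : ℝ := min (2 * γ * β) (2 * α) with hcdef
  have hcpos : 0 < c := lt_min (by positivity) (by positivity)
  have hsmall : ∀ t ∈ Ici T₀, E t ≤ L0 := by
    intro t ht
    exact (hEanti hT₀mem (le_trans hT₀0 ht) ht).trans hT₀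
  have hvsmall : ∀ t ∈ Ici T₀, ‖v t‖ ≤ ε := by
    intro t ht
    have h1 := hvle t
    have h2 := hsmall t ht
    have h3 : ‖v t‖ ^ 2 ≤ ε ^ 2 := by rw [hL0def] at h2; linarith
    have h := Real.sqrt_le_sqrt h3
    rwa [Real.sqrt_sq (norm_nonneg _), Real.sqrt_sq hε.le] at h
  have hdecay : ∀ t ∈ Ici T₀, E' t + c * E t ≤ 0 := by
    intro t ht
    have h1 := hPL (x t)
    have h2 := hloc (v t) (hvsmall t ht)
    have hc1 : c ≤ 2 * γ * β := min_le_left _ _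
    have hc2 : c ≤ 2 * α := min_le_right _ _
    have hβ1 : β * (2 * γ * (f (x t) - f xbar)) ≤ β * ‖gradient f (x t)‖ ^ 2 :=
      mul_le_mul_of_nonneg_left h1 hβ.le
    have hf0 : 0 ≤ f (x t) - f xbar := sub_nonneg.2 (hxbar _)
    have hv0 : (0:ℝ) ≤ ‖v t‖ ^ 2 := sq_nonneg _
    simp only [hE'def, hEdef]
    nlinarith
  set A : ℝ := E 0 * Real.exp (c * T₀) with hA
  have hA0 : 0 ≤ A := mul_nonneg (hEnonneg 0) (Real.exp_pos _).le
  have hGanti : AntitoneOn (fun t => E t * Real.exp (c * t)) (Ici T₀) := by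
    apply antitoneOn_of_hasDerivWithinAt_nonpos (convex_Ici T₀)
      (f' := fun t => E' t * Real.exp (c * t) + E t * (Real.exp (c * t) * c))
    · apply ContinuousOn.mul
      · exact hEcont.mono (Ici_subset_Ici.2 hT₀0)
      · exact (Real.continuous_exp.comp (continuous_const.mul continuous_id)).continuousOn
    · intro t ht
      have ht' : T₀ < t := by rwa [interior_Ici] at ht
      have htmem : t ∈ Ici (0:ℝ) := le_trans hT₀0 ht'.le
      have hexp : HasDerivAt (fun s => Real.exp (c * s)) (Real.exp (c * t) * c) t := by
        simpa using ((hasDerivAt_id t).const_mul c).exp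
      have hsub : interior (Ici T₀) ⊆ Ici (0:ℝ) := by
        rw [interior_Ici]
        exact fun s hs => le_trans hT₀0 (le_of_lt hs)
      exact ((hE t htmem).mono hsub).mul hexp.hasDerivWithinAt
    · intro t ht
      have ht' : T₀ < t := by rwa [interior_Ici] at ht
      have hd := hdecay t ht'.le
      have he := (Real.exp_pos (c * t)).le
      have h3 : E' t * Real.exp (c * t) + E t * (Real.exp (c * t) * c)
          = (E' t + c * E t) * Real.exp (c * t) := by ring
      rw [h3]
      exact mul_nonpos_of_nonpos_of_nonneg hd he
  have hEexp : ∀ t ∈ Ici (0:ℝ), E t ≤ A * Real.exp (-(c * t)) := by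
    intro t ht
    by_cases hcase : T₀ ≤ t
    · have hG := hGanti (self_mem_Ici) hcase hcase
      simp only at hG
      have hET₀ : E T₀ ≤ E 0 := hEanti self_mem_Ici hT₀mem hT₀0
      have h2 : E t * Real.exp (c * t) ≤ A := by
        rw [hA]
        exact hG.trans (mul_le_mul_of_nonneg_right hET₀ (Real.exp_pos _).le)
      have h4 := mul_le_mul_of_nonneg_right h2 (Real.exp_pos (-(c * t))).le
      rw [mul_assoc, ← Real.exp_add] at h4
      simpa using h4
    · push_neg at hcase
      have h1 : E t ≤ E 0 := hEanti self_mem_Ici ht ht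
      have h5 : (1:ℝ) ≤ Real.exp (c * T₀) * Real.exp (-(c * t)) := by
        rw [← Real.exp_add]
        apply Real.one_le_exp
        nlinarith
      have hE00 : 0 ≤ E 0 := hEnonneg 0
      rw [hA]
      nlinarith [Real.exp_pos (-(c * t))]
  -- bound on the trajectory, Lipschitz constant for the gradient
  set R : ℝ := Real.sqrt (2 * E 0 / γ) with hR
  have hRt : ∀ t ∈ Ici (0:ℝ), ‖x t - xbar‖ ≤ R := by
    intro t ht
    have h1 := hdist (x t)
    have h2 : f (x t) - f xbar ≤ E 0 := (hffle t).trans (hEanti self_mem_Ici ht ht)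
    have h3 : ‖x t - xbar‖ ^ 2 ≤ 2 * E 0 / γ := by
      rw [le_div_iff₀ hγ]; nlinarith
    have h := Real.sqrt_le_sqrt h3
    rwa [Real.sqrt_sq (norm_nonneg _)] at h
  obtain ⟨Kf, hKf⟩ := hflip (closedBall xbar R) isBounded_closedBall
  have hgradbound : ∀ t ∈ Ici (0:ℝ), ‖gradient f (x t)‖ ≤ (Kf : ℝ) * ‖x t - xbar‖ := by
    intro t ht
    have hmem1 : x t ∈ closedBall xbar R := by
      rw [mem_closedBall, dist_eq_norm]; exact hRt t ht
    have hmem2 : xbar ∈ closedBall xbar R := mem_closedBall_self (Real.sqrt_nonneg _)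
    have h := hKf.dist_le_mul (x t) hmem1 xbar hmem2
    rwa [dist_eq_norm, dist_eq_norm, hgradzero, sub_zero] at h
  -- final constants
  set lam : ℝ := c / 2 with hlam
  have hlampos : 0 < lam := by positivity
  set D1 : ℝ := Real.sqrt (2 * A / γ) with hD1
  set D2 : ℝ := Real.sqrt (2 * A) with hD2
  have hexpsq : ∀ t : ℝ, Real.exp (-lam * t) * Real.exp (-lam * t) = Real.exp (-(c * t)) := by
    intro t
    rw [← Real.exp_add]
    congr 1
    rw [hlam]; ring
  have hexpmono : ∀ t : ℝ, 0 ≤ t → Real.exp (-(c * t)) ≤ Real.exp (-lam * t) := by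
    intro t ht
    apply Real.exp_le_exp.2
    rw [hlam]; nlinarith
  have hxb : ∀ t ∈ Ici (0:ℝ), ‖x t - xbar‖ ≤ D1 * Real.exp (-lam * t) := by
    intro t ht
    have h1 := hdist (x t)
    have h2 := (hffle t).trans (hEexp t ht)
    have hkey2 : ‖x t - xbar‖ ^ 2 ≤ (D1 * Real.exp (-lam * t)) ^ 2 := by
      have hrw : (D1 * Real.exp (-lam * t)) ^ 2 = 2 * A / γ * Real.exp (-(c * t)) := by
        rw [mul_pow, hD1, Real.sq_sqrt (by positivity), pow_two, hexpsq]
      rw [hrw]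
      have hrw2 : 2 * A / γ * Real.exp (-(c * t)) = 2 * A * Real.exp (-(c * t)) / γ := by ring
      rw [hrw2, le_div_iff₀ hγ]
      nlinarith
    have hD1e : 0 ≤ D1 * Real.exp (-lam * t) := by positivity
    have h := Real.sqrt_le_sqrt hkey2
    rwa [Real.sqrt_sq (norm_nonneg _), Real.sqrt_sq hD1e] at h
  have hvb : ∀ t ∈ Ici (0:ℝ), ‖v t‖ ≤ D2 * Real.exp (-lam * t) := by
    intro t ht
    have h1 := hvle t
    have h2 := (hvle t).trans (hEexp t ht)
    have hkey2 : ‖v t‖ ^ 2 ≤ (D2 * Real.exp (-lam * t)) ^ 2 := by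
      have hrw : (D2 * Real.exp (-lam * t)) ^ 2 = 2 * A * Real.exp (-(c * t)) := by
        rw [mul_pow, hD2, Real.sq_sqrt (by positivity), pow_two, hexpsq]
      rw [hrw]; nlinarith
    have hD2e : 0 ≤ D2 * Real.exp (-lam * t) := by positivity
    have h := Real.sqrt_le_sqrt hkey2
    rwa [Real.sqrt_sq (norm_nonneg _), Real.sqrt_sq hD2e] at h
  have hfb : ∀ t ∈ Ici (0:ℝ), f (x t) - f xbar ≤ A * Real.exp (-lam * t) := by
    intro t ht
    have h2 := (hffle t).trans (hEexp t ht)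
    have h3 := mul_le_mul_of_nonneg_left (hexpmono t ht) hA0
    linarith
  have hgb : ∀ t ∈ Ici (0:ℝ),
      ‖gradient f (x t)‖ ≤ (Kf : ℝ) * D1 * Real.exp (-lam * t) := by
    intro t ht
    have h1 := hgradbound t ht
    have h2 := mul_le_mul_of_nonneg_left (hxb t ht) Kf.coe_nonneg
    calc ‖gradient f (x t)‖ ≤ (Kf : ℝ) * ‖x t - xbar‖ := h1
      _ ≤ (Kf : ℝ) * (D1 * Real.exp (-lam * t)) := h2
      _ = (Kf : ℝ) * D1 * Real.exp (-lam * t) := by ring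
  have hx'b : ∀ t ∈ Ici (0:ℝ),
      ‖x' t‖ ≤ (D2 + β * ((Kf : ℝ) * D1)) * Real.exp (-lam * t) := by
    intro t ht
    have hx't : x' t = v t - β • gradient f (x t) := by rw [hvdef]; simp
    have h1 : ‖x' t‖ ≤ ‖v t‖ + β * ‖gradient f (x t)‖ := by
      rw [hx't]
      calc ‖v t - β • gradient f (x t)‖ ≤ ‖v t‖ + ‖β • gradient f (x t)‖ := norm_sub_le _ _
        _ = ‖v t‖ + β * ‖gradient f (x t)‖ := by rw [norm_smul, Real.norm_of_nonneg hβ.le]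
    have h2 := hvb t ht
    have h3 := hgb t ht
    have h4 := mul_le_mul_of_nonneg_left h3 hβ.le
    calc ‖x' t‖ ≤ ‖v t‖ + β * ‖gradient f (x t)‖ := h1
      _ ≤ D2 * Real.exp (-lam * t) + β * ((Kf : ℝ) * D1 * Real.exp (-lam * t)) := by linarith
      _ = (D2 + β * ((Kf : ℝ) * D1)) * Real.exp (-lam * t) := by ring
  -- assemble
  set K : ℝ := A + D1 + D2 + (Kf : ℝ) * D1 + (D2 + β * ((Kf : ℝ) * D1)) with hKdef
  have hD10 : 0 ≤ D1 := Real.sqrt_nonneg _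
  have hD20 : 0 ≤ D2 := Real.sqrt_nonneg _
  have hKf0 : 0 ≤ (Kf : ℝ) := Kf.coe_nonneg
  have hKD0 : 0 ≤ (Kf : ℝ) * D1 := mul_nonneg hKf0 hD10
  have hbK0 : 0 ≤ β * ((Kf : ℝ) * D1) := mul_nonneg hβ.le hKD0
  have hK0 : 0 ≤ K := by rw [hKdef]; linarith
  refine ⟨K, hK0, lam, hlampos, ?_⟩
  intro t ht
  have hexp0 : 0 ≤ Real.exp (-lam * t) := (Real.exp_pos _).le
  have hbump : ∀ B : ℝ, B ≤ K → B * Real.exp (-lam * t) ≤ K * Real.exp (-lam * t) :=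
    fun B hB => mul_le_mul_of_nonneg_right hB hexp0
  refine ⟨(hfb t ht).trans (hbump A (by rw [hKdef]; linarith)),
    (hxb t ht).trans (hbump D1 (by rw [hKdef]; linarith)),
    (hvb t ht).trans (hbump D2 (by rw [hKdef]; linarith)),
    (hx'b t ht).trans (hbump _ (by rw [hKdef]; linarith)),
    (hgb t ht).trans (hbump _ (by rw [hKdef]; linarith))⟩
end
end
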